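/- arXiv:1307.0992 — 9 statements merged into one kernel-verified Lean document; each statement's English description precedes it below -/
import Mathlib

section
/- If a graph G contains, for every natural number k, a family of k pairwise edge-disjoint paths from a vertex v to a vertex w, then G contains an infinite family of pairwise edge-disjoint v–w paths. -/
open SimpleGraph

variable {V : Type*}

/-- A ray in `G`: an injective sequence of vertices with consecutive vertices adjacent. -/
def IsRay (G : SimpleGraph V) (f : ℕ → V) : Prop :=
  Function.Injective f ∧ ∀ n, G.Adj (f n) (f (n + 1))

/-- A double ray in `G`: an injective two-way infinite sequence with consecutive
vertices adjacent. -/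
def IsDoubleRay (G : SimpleGraph V) (f : ℤ → V) : Prop :=
  Function.Injective f ∧ ∀ n, G.Adj (f n) (f (n + 1))

/-- The edges used by a ray. -/
def rayEdges (f : ℕ → V) : Set (Sym2 V) := {e | ∃ n, e = s(f n, f (n + 1))}

/-- The edges used by a double ray. -/
def drEdges (f : ℤ → V) : Set (Sym2 V) := {e | ∃ n : ℤ, e = s(f n, f (n + 1))}

/-- Two rays are equivalent (belong to the same end) iff no finite vertex set
separates them: for every finite `S` there are tails of both rays avoiding `S`
which are joined by a walk avoiding `S`. -/
def RayEquiv (G : SimpleGraph V) (f g : ℕ → V) : Prop :=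
  ∀ S : Finset V, ∃ a b, (∀ i, a ≤ i → f i ∉ S) ∧ (∀ j, b ≤ j → g j ∉ S) ∧
    ∃ w : G.Walk (f a) (g b), ∀ v ∈ w.support, v ∉ S

/-- The forward ray of a double ray. -/
def drFwd (f : ℤ → V) : ℕ → V := fun n => f n

/-- The backward ray of a double ray. -/
def drBwd (f : ℤ → V) : ℕ → V := fun n => f (-(n : ℤ) - 1)

/-- The end (represented by the ray `R`) has vertex-degree exactly `k`:
there are `k` pairwise vertex-disjoint rays equivalent to `R`, but not `k + 1`. -/
def EndVertexDegree (G : SimpleGraph V) (R : ℕ → V) (k : ℕ) : Prop :=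
  (∃ F : Fin k → ℕ → V, (∀ i, IsRay G (F i) ∧ RayEquiv G R (F i)) ∧
      Pairwise fun i j => Disjoint (Set.range (F i)) (Set.range (F j))) ∧
  ¬ ∃ F : Fin (k + 1) → ℕ → V, (∀ i, IsRay G (F i) ∧ RayEquiv G R (F i)) ∧
      Pairwise fun i j => Disjoint (Set.range (F i)) (Set.range (F j))

private def Good (G : SimpleGraph V) (v w : V) (s : Set (Sym2 V)) : Prop :=
  ∀ k : ℕ, ∃ P : Fin k → G.Walk v w, (∀ i, (P i).IsPath) ∧
    (Pairwise fun i j => List.Disjoint (P i).edges (P j).edges) ∧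
    ∀ i, ∀ e ∈ (P i).edges, e ∉ s

private lemma step (G : SimpleGraph V) (v w : V) (s : Set (Sym2 V))
    (hs : Good G v w s) :
    ∃ Q : G.Walk v w, Q.IsPath ∧ (∀ e ∈ Q.edges, e ∉ s) ∧
      Good G v w (s ∪ {e | e ∈ Q.edges}) := by
  classical
  obtain ⟨P1, h1, _, h3⟩ := hs 1
  set Q := P1 0 with hQ
  refine ⟨Q, h1 0, h3 0, ?_⟩
  intro k
  set L := Q.edges.length with hL
  obtain ⟨P, hp, hdis, havoid⟩ := hs (k + L)
  set A : Finset (Fin (k + L)) :=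
    Finset.univ.filter (fun i => List.Disjoint (P i).edges Q.edges) with hA
  have hcardc : Aᶜ.card ≤ L := by
    have hex : ∀ i : {x // x ∈ Aᶜ}, ∃ e ∈ Q.edges.toFinset, e ∈ (P i.1).edges := by
      rintro ⟨i, hi⟩
      have hi' : ¬ List.Disjoint (P i).edges Q.edges := by
        simpa [hA] using hi
      rw [List.Disjoint] at hi'
      push_neg at hi'
      obtain ⟨e, he1, he2⟩ := hi'
      exact ⟨e, List.mem_toFinset.2 he2.1, he1⟩
    choose f hf1 hf2 using hex
    have : Aᶜ.attach.card ≤ Q.edges.toFinset.card := by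
      apply Finset.card_le_card_of_injOn f (fun a _ => hf1 a)
      intro i _ j _ hij
      by_contra hne
      have hne' : (i : Fin (k + L)) ≠ (j : Fin (k + L)) := fun hh => hne (Subtype.ext hh)
      exact (hdis hne') (hf2 i) (hij ▸ hf2 j)
    calc Aᶜ.card = Aᶜ.attach.card := (by simp)
      _ ≤ Q.edges.toFinset.card := this
      _ ≤ Q.edges.length := Q.edges.toFinset_card_le
  have hk : k ≤ A.card := by
    have h1 := Finset.card_compl_add_card A
    have h2 : Fintype.card (Fin (k + L)) = k + L := Fintype.card_fin _
    omega
  obtain ⟨t, ht, htc⟩ := Finset.exists_subset_card_eq hk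
  let e' : Fin k → Fin (k + L) := fun i => (t.orderIsoOfFin htc i : Fin (k + L))
  have he'inj : Function.Injective e' := fun i j hij =>
    (t.orderIsoOfFin htc).injective (Subtype.ext hij)
  have he'mem : ∀ i, e' i ∈ A := fun i => ht (t.orderIsoOfFin htc i).2
  refine ⟨fun i => P (e' i), fun i => hp _, ?_, ?_⟩
  · intro i j hij
    exact hdis (fun hh => hij (he'inj hh))
  · intro i e he
    have hAi : List.Disjoint (P (e' i)).edges Q.edges := by
      have := he'mem i
      simpa [hA] using this
    rintro (hes | heq)
    · exact havoid _ e he hes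
    · exact hAi he heq

/-- Arbitrarily many pairwise edge-disjoint `v`–`w` paths give infinitely many. -/
theorem stmt_2 (G : SimpleGraph V) (v w : V)
    (h : ∀ k : ℕ, ∃ P : Fin k → G.Walk v w, (∀ i, (P i).IsPath) ∧
      Pairwise fun i j => List.Disjoint (P i).edges (P j).edges) :
    ∃ P : ℕ → G.Walk v w, (∀ i, (P i).IsPath) ∧
      Pairwise fun i j => List.Disjoint (P i).edges (P j).edges := by
  classical
  have h0 : Good G v w ∅ := by
    intro k
    obtain ⟨P, h1, h2⟩ := h k
    exact ⟨P, h1, h2, by simp⟩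
  choose Qf hQ1 hQ2 hQ3 using step G v w
  let F : ℕ → Σ' s : Set (Sym2 V), Good G v w s := fun n =>
    Nat.rec ⟨∅, h0⟩ (fun _ p => ⟨p.1 ∪ {e | e ∈ (Qf p.1 p.2).edges}, hQ3 p.1 p.2⟩) n
  have hFs : ∀ n, (F (n + 1)).1 = (F n).1 ∪ {e | e ∈ (Qf (F n).1 (F n).2).edges} := fun n => rfl
  let P : ℕ → G.Walk v w := fun n => Qf (F n).1 (F n).2
  have hmono : ∀ m n, m ≤ n → (F m).1 ⊆ (F n).1 := by
    intro m n hmn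
    induction n with
    | zero => simp [Nat.le_zero.mp hmn]
    | succ n ih =>
      rcases Nat.lt_or_ge m (n+1) with hlt | hge
      · exact (ih (Nat.lt_succ_iff.mp hlt)).trans (by rw [hFs]; exact Set.subset_union_left)
      · have : m = n + 1 := le_antisymm hmn hge
        subst this; exact subset_rfl
  have hsub : ∀ m n, m < n → ∀ e ∈ (P m).edges, e ∈ (F n).1 := by
    intro m n hmn e he
    apply hmono (m + 1) n hmn
    rw [hFs]
    exact Set.mem_union_right _ he
  have key : ∀ m n, m < n → List.Disjoint (P m).edges (P n).edges := by
    intro m n hmn e he1 he2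
    exact hQ2 (F n).1 (F n).2 e he2 (hsub m n hmn e he1)
  refine ⟨P, fun n => hQ1 _ _, ?_⟩
  intro m n hmn
  rcases lt_or_gt_of_ne hmn with hlt | hlt
  · exact key m n hlt
  · exact (key n m hlt).symm
end

section
/- Every tree with infinitely many ends contains an infinite family of pairwise edge-disjoint double rays. -/
open SimpleGraph

variable {V : Type*}

namespace StmtAux

variable {V : Type*} {G : SimpleGraph V}

/-- The walk along a function with adjacent consecutive values, from index 0 to n. -/
def walkOfFun (f : ℕ → V) (hf : ∀ n, G.Adj (f n) (f (n + 1))) : (n : ℕ) → G.Walk (f 0) (f n)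
  | 0 => Walk.nil
  | n + 1 => (walkOfFun f hf n).concat (hf n)

lemma walkOfFun_length (f : ℕ → V) (hf : ∀ n, G.Adj (f n) (f (n + 1))) (n : ℕ) :
    (walkOfFun f hf n).length = n := by
  induction n with
  | zero => rfl
  | succ n ih => simp [walkOfFun, Walk.length_concat, ih]

lemma walkOfFun_support (f : ℕ → V) (hf : ∀ n, G.Adj (f n) (f (n + 1))) (n : ℕ) :
    (walkOfFun f hf n).support = (List.range (n + 1)).map f := by
  induction n with
  | zero => rfl
  | succ n ih =>
    simp only [walkOfFun, Walk.support_concat, ih, List.range_succ (n := n + 1)]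
    simp

lemma walkOfFun_isPath (f : ℕ → V) (hinj : Function.Injective f)
    (hf : ∀ n, G.Adj (f n) (f (n + 1))) (n : ℕ) : (walkOfFun f hf n).IsPath := by
  rw [Walk.isPath_def, walkOfFun_support]
  exact List.nodup_range.map hinj

/-- In a tree, two injective adjacency sequences from the same start that meet
again do so at the same index, and agree on all earlier indices. -/
lemma eq_of_ray_meet (hT : G.IsTree) {f g : ℕ → V}
    (hfi : Function.Injective f) (hfa : ∀ n, G.Adj (f n) (f (n + 1)))
    (hgi : Function.Injective g) (hga : ∀ n, G.Adj (g n) (g (n + 1)))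
    (h0 : f 0 = g 0) {p q : ℕ} (h : f p = g q) : p = q ∧ ∀ m ≤ p, f m = g m := by
  have hWf := walkOfFun_isPath f hfi hfa p
  have hWg : ((walkOfFun g hga q).copy h0.symm h.symm).IsPath := by
    rw [Walk.isPath_copy]; exact walkOfFun_isPath g hgi hga q
  obtain ⟨w, -, hu⟩ := hT.existsUnique_path (f 0) (f p)
  have heq : walkOfFun f hfa p = (walkOfFun g hga q).copy h0.symm h.symm :=
    (hu _ hWf).trans (hu _ hWg).symm
  have hlen : p = q := by
    have := congrArg Walk.length heq
    rwa [walkOfFun_length, Walk.length_copy, walkOfFun_length] at this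
  subst hlen
  have hsup := congrArg Walk.support heq
  rw [walkOfFun_support, Walk.support_copy, walkOfFun_support] at hsup
  refine ⟨rfl, fun m hm => ?_⟩
  have hm' : m < (List.range (p + 1)).length := by simpa using Nat.lt_succ_of_le hm
  have := congrArg (fun l : List V => l[m]?) hsup
  simp only [List.getElem?_map] at this
  rw [List.getElem?_eq_getElem hm'] at this
  simp only [List.getElem_range, Option.map_some] at this
  exact Option.some.inj this

lemma IsPath.getVert_inj {u v : V} {p : G.Walk u v} (hp : p.IsPath) :
    ∀ {i j : ℕ}, i ≤ p.length → j ≤ p.length → p.getVert i = p.getVert j → i = j := by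
  induction p with
  | nil => intro i j hi hj _; simp at hi hj; omega
  | @cons u x w h q ih =>
    intro i j hi hj hij
    rw [Walk.cons_isPath_iff] at hp
    match i, j with
    | 0, 0 => rfl
    | 0, j + 1 =>
      exfalso
      apply hp.2
      rw [Walk.mem_support_iff_exists_getVert]
      refine ⟨j, ?_, by simpa [Walk.length_cons] using hj⟩
      simpa [Walk.getVert_zero, Walk.getVert_cons_succ] using hij.symm
    | i + 1, 0 =>
      exfalso
      apply hp.2
      rw [Walk.mem_support_iff_exists_getVert]
      refine ⟨i, ?_, by simpa [Walk.length_cons] using hi⟩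
      simpa [Walk.getVert_zero, Walk.getVert_cons_succ] using hij
    | i + 1, j + 1 =>
      have := ih hp.1 (by simpa [Walk.length_cons] using hi)
        (by simpa [Walk.length_cons] using hj)
        (by simpa [Walk.getVert_cons_succ] using hij)
      omega


/-- Reroot a ray at a given vertex `v`: produce a ray starting at `v` sharing a tail. -/
lemma reroot (hC : G.Connected) (v : V) {f : ℕ → V}
    (hfi : Function.Injective f) (hfa : ∀ n, G.Adj (f n) (f (n + 1))) :
    ∃ g : ℕ → V, Function.Injective g ∧ (∀ n, G.Adj (g n) (g (n + 1))) ∧ g 0 = v ∧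
      ∃ l m : ℕ, ∀ k, g (l + k) = f (m + k) := by
  classical
  obtain ⟨W0⟩ := hC.preconnected v (f 0)
  set P : G.Path v (f 0) := W0.toPath with hP
  have hp : (P : G.Walk v (f 0)).IsPath := P.2
  have hAfin : {n | f n ∈ (P : G.Walk v (f 0)).support}.Finite := by
    have : {n | f n ∈ (P : G.Walk v (f 0)).support}
        = f ⁻¹' {x | x ∈ (P : G.Walk v (f 0)).support} := rfl
    rw [this]
    exact Set.Finite.preimage hfi.injOn (List.finite_toSet _)
  have hA0 : 0 ∈ {n | f n ∈ (P : G.Walk v (f 0)).support} := by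
    simp [Walk.end_mem_support]
  set s := hAfin.toFinset with hs
  have hsne : s.Nonempty := ⟨0, by simp [hs, hA0]⟩
  set m := s.max' hsne with hm
  have hmA : f m ∈ (P : G.Walk v (f 0)).support := by
    have := s.max'_mem hsne
    simpa [hs] using this
  have hmax : ∀ n, f n ∈ (P : G.Walk v (f 0)).support → n ≤ m := by
    intro n hn
    exact s.le_max' n (by simpa [hs] using hn)
  set Q : G.Walk v (f m) := (P : G.Walk v (f 0)).takeUntil (f m) hmA with hQdef
  have hQ : Q.IsPath := hp.takeUntil hmA
  have hQsub : Q.support ⊆ (P : G.Walk v (f 0)).support := Walk.support_takeUntil_subset _ hmA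
  set l := Q.length with hl
  have hQl : Q.getVert l = f m := Walk.getVert_length Q
  set g : ℕ → V := fun n => if n < l then Q.getVert n else f (m + (n - l)) with hg
  have hglarge : ∀ n, l ≤ n → g n = f (m + (n - l)) := by
    intro n hn; simp [hg, Nat.not_lt.mpr hn]
  have hgsmall : ∀ n, n < l → g n = Q.getVert n := by
    intro n hn; simp [hg, hn]
  have hgQ : ∀ n, n ≤ l → g n = Q.getVert n := by
    intro n hn
    rcases Nat.lt_or_ge n l with h | h
    · exact hgsmall n h
    · have hnl : n = l := le_antisymm hn h
      rw [hglarge n h, hnl]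
      simp [hQl]
  refine ⟨g, ?_, ?_, ?_, l, m,
    fun k => by rw [hglarge (l + k) (Nat.le_add_right _ _)]; congr 1; omega⟩
  · -- injective
    intro n n' hnn'
    rcases Nat.lt_or_ge n l with h1 | h1 <;> rcases Nat.lt_or_ge n' l with h2 | h2
    · rw [hgsmall n h1, hgsmall n' h2] at hnn'
      exact IsPath.getVert_inj hQ h1.le h2.le hnn'
    · -- n < l, n' ≥ l
      exfalso
      rw [hgsmall n h1, hglarge n' h2] at hnn'
      have hmem : f (m + (n' - l)) ∈ (P : G.Walk v (f 0)).support := by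
        rw [← hnn']
        exact hQsub (Walk.mem_support_iff_exists_getVert.mpr ⟨n, rfl, h1.le⟩)
      have hle := hmax _ hmem
      have hn'l : n' = l := by omega
      rw [hn'l] at hnn'
      have : f (m + (l - l)) = Q.getVert l := by
        simp [hQl]
      rw [this] at hnn'
      have := IsPath.getVert_inj hQ h1.le le_rfl hnn'
      omega
    · exfalso
      rw [hgsmall n' h2, hglarge n h1] at hnn'
      have hmem : f (m + (n - l)) ∈ (P : G.Walk v (f 0)).support := by
        rw [hnn']
        exact hQsub (Walk.mem_support_iff_exists_getVert.mpr ⟨n', rfl, h2.le⟩)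
      have hle := hmax _ hmem
      have hnl : n = l := by omega
      rw [hnl] at hnn'
      have : f (m + (l - l)) = Q.getVert l := by
        simp [hQl]
      rw [this] at hnn'
      have := IsPath.getVert_inj hQ h2.le (le_refl l) hnn'.symm
      omega
    · rw [hglarge n h1, hglarge n' h2] at hnn'
      have := hfi hnn'
      omega
  · -- adjacency
    intro n
    rcases Nat.lt_or_ge (n + 1) l with h | h
    · rw [hgsmall n (by omega), hgsmall (n + 1) h]
      exact Q.adj_getVert_succ (by omega)
    · rcases Nat.lt_or_ge n l with h' | h'
      · have hnl : n + 1 = l := by omega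
        rw [hgsmall n h', hgQ (n + 1) (by omega)]
        exact Q.adj_getVert_succ (by omega)
      · rw [hglarge n h', hglarge (n + 1) (by omega)]
        have harith : m + (n + 1 - l) = (m + (n - l)) + 1 := by omega
        rw [harith]
        exact hfa _
  · -- g 0 = v
    rcases Nat.lt_or_ge 0 l with h | h
    · rw [hgsmall 0 h, Walk.getVert_zero]
    · have hl0 : l = 0 := by omega
      have h2 := hQl
      rw [hl0, Walk.getVert_zero] at h2
      rw [hglarge 0 (by omega)]
      simpa [hl0] using h2.symm


/-- Step lemma for the extraction: from an infinite set pick a point and an infinite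
subset on which the "divergence" with that point is constant. -/
lemma extract_step (c : ℕ → ℕ → ℕ) (hsymm : ∀ i j, c i j = c j i)
    (hultra : ∀ i j k, i ≠ j → j ≠ k → i ≠ k → min (c i j) (c j k) ≤ c i k)
    (S : Set ℕ) (hS : S.Infinite) :
    ∃ y ∈ S, ∃ T ⊆ S, T.Infinite ∧ y ∉ T ∧ ∃ u, ∀ z ∈ T, c y z = u := by
  obtain ⟨x, hx⟩ := hS.nonempty
  have hT0 : (S \ {x}).Infinite := hS.diff (Set.finite_singleton x)
  by_cases hb : ∃ u, {z ∈ S \ {x} | c x z = u}.Infinite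
  · obtain ⟨u, hu⟩ := hb
    refine ⟨x, hx, {z ∈ S \ {x} | c x z = u}, fun z hz => hz.1.1, hu, ?_, u, fun z hz => hz.2⟩
    intro hmem
    exact hmem.1.2 rfl
  · push_neg at hb
    obtain ⟨y, hy⟩ := hT0.nonempty
    have hxy : x ≠ y := fun h => hy.2 h.symm
    set T : Set ℕ := {z ∈ S \ {x} | c x y < c x z} with hT
    have hTinf : T.Infinite := by
      have hsplit : S \ {x} ⊆ T ∪ ⋃ u ∈ Finset.range (c x y + 1), {z ∈ S \ {x} | c x z = u} := by
        intro z hz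
        rcases Nat.lt_or_ge (c x y) (c x z) with h | h
        · exact Set.mem_union_left _ ⟨hz, h⟩
        · refine Set.mem_union_right _ ?_
          simp only [Set.mem_iUnion, Finset.mem_range]
          exact ⟨c x z, by omega, hz, rfl⟩
      have hfin : (⋃ u ∈ Finset.range (c x y + 1), {z ∈ S \ {x} | c x z = u}).Finite :=
        Set.Finite.biUnion (Finset.range (c x y + 1)).finite_toSet (fun u _ => hb u)
      by_contra hcon
      rw [Set.not_infinite] at hcon
      exact hT0 ((hcon.union hfin).subset hsplit)
    refine ⟨y, hy.1, T, fun z hz => hz.1.1, hTinf, ?_, c x y, ?_⟩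
    · intro hmem
      exact lt_irrefl _ hmem.2
    · intro z hz
      have hxz : x ≠ z := fun h => hz.1.2 h.symm
      have hyz : y ≠ z := by
        rintro rfl
        exact lt_irrefl _ hz.2
      have h1 : c x y ≤ c y z := by
        have := hultra y x z hxy.symm hxz hyz
        rw [hsymm y x] at this
        have hlt := hz.2
        omega
      have h2 : c y z ≤ c x y := by
        have := hultra x z y hxz hyz.symm hxy
        rw [hsymm z y] at this
        have hlt := hz.2
        omega
      omega

/-- Extraction: an injective sequence on which the divergence function is
`t (min i j)` for a monotone `t`. -/
lemma extract (c : ℕ → ℕ → ℕ) (hsymm : ∀ i j, c i j = c j i)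
    (hultra : ∀ i j k, i ≠ j → j ≠ k → i ≠ k → min (c i j) (c j k) ≤ c i k) :
    ∃ x : ℕ → ℕ, Function.Injective x ∧ ∃ t : ℕ → ℕ, Monotone t ∧
      ∀ i j, i < j → c (x i) (x j) = t i := by
  have step : ∀ S : {S : Set ℕ // S.Infinite}, ∃ p : ℕ × ℕ × {T : Set ℕ // T.Infinite},
      p.1 ∈ S.1 ∧ p.2.2.1 ⊆ S.1 ∧ p.1 ∉ p.2.2.1 ∧ ∀ z ∈ p.2.2.1, c p.1 z = p.2.1 := by
    intro S
    obtain ⟨y, hyS, T, hTS, hTinf, hyT, u, hu⟩ := extract_step c hsymm hultra S.1 S.2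
    exact ⟨⟨y, u, ⟨T, hTinf⟩⟩, hyS, hTS, hyT, hu⟩
  choose next hmem hsub hnot hval using step
  let chain : ℕ → {S : Set ℕ // S.Infinite} :=
    fun n => Nat.rec ⟨Set.univ, Set.infinite_univ⟩ (fun _ S => (next S).2.2) n
  have hchain : ∀ n, chain (n + 1) = (next (chain n)).2.2 := fun n => rfl
  set x : ℕ → ℕ := fun n => (next (chain n)).1 with hx
  set t : ℕ → ℕ := fun n => (next (chain n)).2.1 with ht
  have hxmem : ∀ n, x n ∈ (chain n).1 := fun n => hmem (chain n)
  have hnested : ∀ i j, i ≤ j → (chain j).1 ⊆ (chain i).1 := by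
    intro i j hij
    induction j with
    | zero => have : i = 0 := by omega
              subst this; exact subset_rfl
    | succ j ih =>
      rcases Nat.lt_or_ge i (j + 1) with h | h
      · intro z hz
        exact ih (by omega) (by rw [hchain j] at hz; exact hsub (chain j) hz)
      · have : i = j + 1 := by omega
        subst this; exact subset_rfl
  have hxin : ∀ i j, i < j → x j ∈ (next (chain i)).2.2.1 := by
    intro i j hij
    have : x j ∈ (chain j).1 := hxmem j
    have h2 := hnested (i + 1) j hij this
    rwa [hchain i] at h2
  have hcval : ∀ i j, i < j → c (x i) (x j) = t i := fun i j hij => hval (chain i) _ (hxin i j hij)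
  have hxne : ∀ i j, i < j → x i ≠ x j := by
    intro i j hij heq
    have h2 := hxin i j hij
    rw [← heq] at h2
    exact hnot (chain i) h2
  have hxinj : Function.Injective x := by
    intro i j hij
    rcases lt_trichotomy i j with h | h | h
    · exact absurd hij (hxne i j h)
    · exact h
    · exact absurd hij.symm (hxne j i h)
  refine ⟨x, hxinj, t, monotone_nat_of_le_succ ?_, hcval⟩
  intro n
  obtain ⟨z, hz⟩ := (chain (n + 2)).2.nonempty
  have hz1 : z ∈ (next (chain (n + 1))).2.2.1 := by rwa [← hchain (n + 1)]
  have hz0 : z ∈ (next (chain n)).2.2.1 := by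
    have := hnested (n + 1) (n + 2) (by omega) hz
    rwa [hchain n] at this
  have h1 : c (x (n + 1)) z = t (n + 1) := hval (chain (n + 1)) z hz1
  have h0 : c (x n) z = t n := hval (chain n) z hz0
  have h01 : c (x n) (x (n + 1)) = t n := hcval n (n + 1) (by omega)
  have hne1 : x (n + 1) ≠ x n := (hxne n (n + 1) (by omega)).symm
  have hne2 : x n ≠ z := by
    intro h; rw [← h] at hz0; exact hnot (chain n) hz0
  have hne3 : x (n + 1) ≠ z := by
    intro h; rw [← h] at hz1; exact hnot (chain (n + 1)) hz1
  have := hultra (x (n + 1)) (x n) z hne1 hne2 hne3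
  rw [hsymm (x (n + 1)) (x n)] at this
  omega


lemma walk_ge_aux (g : ℕ → V) (hga : ∀ n, G.Adj (g n) (g (n + 1))) {K p q : ℕ}
    (hp : K ≤ p) (hpq : p ≤ q) :
    ∃ w : G.Walk (g p) (g q), ∀ u ∈ w.support, ∃ r, K ≤ r ∧ u = g r := by
  have hadj : ∀ t, G.Adj ((fun t => g (p + t)) t) ((fun t => g (p + t)) (t + 1)) := by
    intro t
    simpa [Nat.add_assoc] using hga (p + t)
  refine ⟨(walkOfFun (fun t => g (p + t)) hadj (q - p)).copy rfl (congrArg g (by omega)), ?_⟩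
  intro u hu
  rw [Walk.support_copy, walkOfFun_support] at hu
  simp only [List.mem_map, List.mem_range] at hu
  obtain ⟨s, hs, rfl⟩ := hu
  exact ⟨p + s, by omega, rfl⟩

lemma walk_ge (g : ℕ → V) (hga : ∀ n, G.Adj (g n) (g (n + 1))) {K p q : ℕ}
    (hp : K ≤ p) (hq : K ≤ q) :
    ∃ w : G.Walk (g p) (g q), ∀ u ∈ w.support, ∃ r, K ≤ r ∧ u = g r := by
  rcases le_or_gt p q with h | h
  · exact walk_ge_aux g hga hp h
  · obtain ⟨w, hw⟩ := walk_ge_aux g hga hq h.le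
    exact ⟨w.reverse, fun u hu => hw u (by rwa [Walk.support_reverse, List.mem_reverse] at hu)⟩


end StmtAux

namespace StmtAux

lemma rayEquiv_of_common {f f' gg : ℕ → V} (hgi : Function.Injective gg)
    (hga : ∀ n, G.Adj (gg n) (gg (n + 1)))
    {l1 m1 l2 m2 : ℕ} (h1 : ∀ k, gg (l1 + k) = f (m1 + k))
    (h2 : ∀ k, gg (l2 + k) = f' (m2 + k)) :
    RayEquiv G f f' := by
  intro S
  have hfin : {k | gg k ∈ (S : Set V)}.Finite :=
    Set.Finite.preimage hgi.injOn S.finite_toSet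
  obtain ⟨B, hB⟩ := hfin.bddAbove
  set K := B + 1 with hK
  have hKS : ∀ k, K ≤ k → gg k ∉ S := by
    intro k hk hmem
    have := hB (Set.mem_setOf.mpr (by exact_mod_cast hmem))
    omega
  refine ⟨m1 + K, m2 + K, ?_, ?_, ?_⟩
  · intro i hi
    have : f i = gg (l1 + (i - m1)) := by
      rw [h1 (i - m1)]; congr 1; omega
    rw [this]
    exact hKS _ (by omega)
  · intro j hj
    have : f' j = gg (l2 + (j - m2)) := by
      rw [h2 (j - m2)]; congr 1; omega
    rw [this]
    exact hKS _ (by omega)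
  · obtain ⟨w, hw⟩ := walk_ge (G := G) gg hga (K := K) (p := l1 + K) (q := l2 + K)
      (by omega) (by omega)
    have e1 : gg (l1 + K) = f (m1 + K) := h1 K
    have e2 : gg (l2 + K) = f' (m2 + K) := h2 K
    refine ⟨w.copy e1 e2, ?_⟩
    intro u hu
    rw [Walk.support_copy] at hu
    obtain ⟨r, hr, rfl⟩ := hw u hu
    exact hKS r hr

end StmtAux


/-- Every tree with infinitely many ends contains infinitely many pairwise
edge-disjoint double rays. -/
theorem stmt_3 (G : SimpleGraph V) (hT : G.IsTree)
    (h : ∃ F : ℕ → ℕ → V, (∀ i, IsRay G (F i)) ∧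
      Pairwise fun i j => ¬ RayEquiv G (F i) (F j)) :
    ∃ F : ℕ → ℤ → V, (∀ i, IsDoubleRay G (F i)) ∧
      Pairwise fun i j => Disjoint (drEdges (F i)) (drEdges (F j)) := by
  classical
  obtain ⟨F, hray, hpair⟩ := h
  have hC := hT.isConnected
  set v : V := F 0 0 with hv
  choose g hgi hga hg0 l m hgt using fun i => StmtAux.reroot hC v (hray i).1 (hray i).2
  have hdiv : ∀ i j, i ≠ j → ∃ n, g i n ≠ g j n := by
    intro i j hij
    by_contra hcon
    push_neg at hcon
    exact hpair hij (StmtAux.rayEquiv_of_common (hgi i) (hga i) (hgt i)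
      (fun k => (hcon (l j + k)).trans (hgt j k)))
  set Dv : ℕ → ℕ → ℕ :=
    fun i j => if hd : ∃ n, g i n ≠ g j n then Nat.find hd else 0 with hDv
  have hDspec : ∀ i j, i ≠ j → g i (Dv i j) ≠ g j (Dv i j) := by
    intro i j hij
    simp only [hDv, dif_pos (hdiv i j hij)]
    exact Nat.find_spec (hdiv i j hij)
  have hDlt : ∀ i j, i ≠ j → ∀ mm, mm < Dv i j → g i mm = g j mm := by
    intro i j hij mm hmm
    simp only [hDv, dif_pos (hdiv i j hij)] at hmm
    by_contra hc
    exact Nat.find_min (hdiv i j hij) hmm hc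
  have hDpos : ∀ i j, i ≠ j → 0 < Dv i j := by
    intro i j hij
    rcases Nat.eq_zero_or_pos (Dv i j) with h0 | hpos
    · exfalso
      have := hDspec i j hij
      rw [h0] at this
      exact this ((hg0 i).trans (hg0 j).symm)
    · exact hpos
  have hDsymm : ∀ i j, Dv i j = Dv j i := by
    intro i j
    rcases eq_or_ne i j with rfl | hij
    · rfl
    · have h1 := hdiv i j hij
      have h2 := hdiv j i hij.symm
      simp only [hDv, dif_pos h1, dif_pos h2]
      exact le_antisymm (Nat.find_min' h1 (Nat.find_spec h2).symm)
        (Nat.find_min' h2 (Nat.find_spec h1).symm)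
  have hultra : ∀ i j k, i ≠ j → j ≠ k → i ≠ k → min (Dv i j) (Dv j k) ≤ Dv i k := by
    intro i j k hij hjk hik
    by_contra hcon
    push_neg at hcon
    obtain ⟨hc1, hc2⟩ := lt_min_iff.mp hcon
    exact hDspec i k hik ((hDlt i j hij _ hc1).trans (hDlt j k hjk _ hc2))
  have hM : ∀ i j, i ≠ j → ∀ p q, g i p = g j q → p = q ∧ p < Dv i j := by
    intro i j hij p q hpq
    obtain ⟨hpq', hall⟩ := StmtAux.eq_of_ray_meet hT (hgi i) (hga i) (hgi j) (hga j)
      ((hg0 i).trans (hg0 j).symm) hpq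
    refine ⟨hpq', ?_⟩
    by_contra hc
    push_neg at hc
    exact hDspec i j hij (hall _ hc)
  obtain ⟨x, hxinj, t, hmono, hcx⟩ := StmtAux.extract Dv hDsymm hultra
  set C : ℕ → ℕ := fun n => t (2 * n) - 1 with hC'
  have hne : ∀ n, x (2 * n) ≠ x (2 * n + 1) := fun n => hxinj.ne (by omega)
  have htC : ∀ n, Dv (x (2 * n)) (x (2 * n + 1)) = C n + 1 := by
    intro n
    have h1 : Dv (x (2 * n)) (x (2 * n + 1)) = t (2 * n) := hcx _ _ (by omega)
    have h2 := hDpos _ _ (hne n)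
    simp only [hC']
    omega
  set F' : ℕ → ℤ → V := fun n z =>
    if 0 ≤ z then g (x (2 * n + 1)) (C n + z.toNat) else g (x (2 * n)) (C n + (-z).toNat)
    with hF'
  have hFpos : ∀ n (k : ℕ), F' n (k : ℤ) = g (x (2 * n + 1)) (C n + k) := by
    intro n k
    simp [hF']
  have hFneg : ∀ n (k : ℕ), F' n (-((k : ℤ) + 1)) = g (x (2 * n)) (C n + (k + 1)) := by
    intro n k
    have h0 : ¬ (0 : ℤ) ≤ -((k : ℤ) + 1) := by omega
    simp only [hF', if_neg h0]
    congr 1 <;> omega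
  -- the two components agree below the branch point
  have hbr : ∀ n, g (x (2 * n)) (C n) = g (x (2 * n + 1)) (C n) :=
    fun n => hDlt _ _ (hne n) (C n) (by rw [htC n]; omega)
  have hDR : ∀ n, IsDoubleRay G (F' n) := by
    intro n
    constructor
    · intro z z' hzz'
      rcases le_or_gt 0 z with hz | hz <;> rcases le_or_gt 0 z' with hz' | hz'
      · obtain ⟨k, rfl⟩ := Int.eq_ofNat_of_zero_le hz
        obtain ⟨k', rfl⟩ := Int.eq_ofNat_of_zero_le hz'
        rw [hFpos, hFpos] at hzz'
        have := hgi _ hzz'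
        omega
      · obtain ⟨k, rfl⟩ := Int.eq_ofNat_of_zero_le hz
        obtain ⟨k', rfl⟩ : ∃ k' : ℕ, z' = -((k' : ℤ) + 1) := ⟨(-z').toNat - 1, by omega⟩
        rw [hFpos, hFneg] at hzz'
        obtain ⟨he, hlt⟩ := hM _ _ (hne n).symm _ _ hzz'
        rw [hDsymm, htC n] at hlt
        omega
      · obtain ⟨k, rfl⟩ : ∃ k : ℕ, z = -((k : ℤ) + 1) := ⟨(-z).toNat - 1, by omega⟩
        obtain ⟨k', rfl⟩ := Int.eq_ofNat_of_zero_le hz'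
        rw [hFneg, hFpos] at hzz'
        obtain ⟨he, hlt⟩ := hM _ _ (hne n) _ _ hzz'
        rw [htC n] at hlt
        omega
      · obtain ⟨k, rfl⟩ : ∃ k : ℕ, z = -((k : ℤ) + 1) := ⟨(-z).toNat - 1, by omega⟩
        obtain ⟨k', rfl⟩ : ∃ k' : ℕ, z' = -((k' : ℤ) + 1) := ⟨(-z').toNat - 1, by omega⟩
        rw [hFneg, hFneg] at hzz'
        have := hgi _ hzz'
        omega
    · intro z
      rcases le_or_gt 0 z with hz | hz
      · obtain ⟨k, rfl⟩ := Int.eq_ofNat_of_zero_le hz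
        have h1 : (k : ℤ) + 1 = ((k + 1 : ℕ) : ℤ) := by omega
        rw [h1, hFpos, hFpos]
        have : C n + (k + 1) = (C n + k) + 1 := by omega
        rw [this]
        exact hga _ _
      · obtain ⟨k, rfl⟩ : ∃ k : ℕ, z = -((k : ℤ) + 1) := ⟨(-z).toNat - 1, by omega⟩
        rcases Nat.eq_zero_or_pos k with rfl | hk
        · have h1 : -((0 : ℕ) + 1 : ℤ) + 1 = ((0 : ℕ) : ℤ) := by omega
          rw [h1, hFneg, hFpos]
          have h3 : C n + 0 = C n := rfl
          have h4 : C n + (0 + 1) = C n + 1 := rfl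
          rw [h3, h4, ← hbr n]
          exact (hga _ (C n)).symm
        · obtain ⟨k', rfl⟩ : ∃ k' : ℕ, k = k' + 1 := ⟨k - 1, by omega⟩
          have h1 : -((k' + 1 : ℕ) + 1 : ℤ) + 1 = -((k' : ℤ) + 1) := by omega
          rw [h1, hFneg, hFneg]
          have : C n + (k' + 1 + 1) = (C n + (k' + 1)) + 1 := by omega
          rw [this]
          exact (hga _ _).symm
  -- edge decomposition
  have hedge : ∀ n e, e ∈ drEdges (F' n) → ∃ w p, (w = x (2 * n) ∨ w = x (2 * n + 1)) ∧
      C n ≤ p ∧ e = s(g w p, g w (p + 1)) := by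
    intro n e he
    obtain ⟨z, rfl⟩ := he
    rcases le_or_gt 0 z with hz | hz
    · obtain ⟨k, rfl⟩ := Int.eq_ofNat_of_zero_le hz
      have h1 : (k : ℤ) + 1 = ((k + 1 : ℕ) : ℤ) := by omega
      rw [h1, hFpos, hFpos]
      refine ⟨x (2 * n + 1), C n + k, Or.inr rfl, by omega, ?_⟩
      have h2 : C n + (k + 1) = (C n + k) + 1 := by omega
      rw [h2]
    · obtain ⟨k, rfl⟩ : ∃ k : ℕ, z = -((k : ℤ) + 1) := ⟨(-z).toNat - 1, by omega⟩
      rcases Nat.eq_zero_or_pos k with rfl | hk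
      · have h1 : -((0 : ℕ) + 1 : ℤ) + 1 = ((0 : ℕ) : ℤ) := by omega
        rw [h1, hFneg, hFpos]
        refine ⟨x (2 * n), C n, Or.inl rfl, le_refl _, ?_⟩
        have h2 : C n + (0 + 1) = C n + 1 := rfl
        have h3 : C n + 0 = C n := rfl
        rw [h2, h3, ← hbr n, Sym2.eq_swap]
      · obtain ⟨k', rfl⟩ : ∃ k' : ℕ, k = k' + 1 := ⟨k - 1, by omega⟩
        have h1 : -((k' + 1 : ℕ) + 1 : ℤ) + 1 = -((k' : ℤ) + 1) := by omega
        rw [h1, hFneg, hFneg]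
        refine ⟨x (2 * n), C n + (k' + 1), Or.inl rfl, by omega, ?_⟩
        have h2 : C n + (k' + 1 + 1) = (C n + (k' + 1)) + 1 := by omega
        rw [h2, Sym2.eq_swap]
  have hdisj : ∀ m' n, m' < n → Disjoint (drEdges (F' m')) (drEdges (F' n)) := by
    intro m' n hmn
    rw [Set.disjoint_left]
    intro e he1 he2
    obtain ⟨w, p, hw, hp, hep⟩ := hedge m' e he1
    obtain ⟨w', q, hw', hq, heq⟩ := hedge n e he2
    have heq2 : s(g w p, g w (p + 1)) = s(g w' q, g w' (q + 1)) := hep.symm.trans heq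
    -- bound on divergence between the two source rays
    have hkey : Dv w w' ≤ C n + 1 := by
      have hCn : C n + 1 = t (2 * n) := by
        have := htC n
        have := hcx (2 * n) (2 * n + 1) (by omega)
        omega
      rcases hw with rfl | rfl <;> rcases hw' with rfl | rfl
      · rw [hcx (2 * m') (2 * n) (by omega), hCn]; exact hmono (by omega)
      · rw [hcx (2 * m') (2 * n + 1) (by omega), hCn]; exact hmono (by omega)
      · rw [hcx (2 * m' + 1) (2 * n) (by omega), hCn]; exact hmono (by omega)
      · rw [hcx (2 * m' + 1) (2 * n + 1) (by omega), hCn]; exact hmono (by omega)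
    have hww' : w ≠ w' := by
      rcases hw with rfl | rfl <;> rcases hw' with rfl | rfl <;>
        exact hxinj.ne (by omega)
    rcases Sym2.eq_iff.mp heq2 with ⟨e1, e2⟩ | ⟨e1, e2⟩
    · obtain ⟨h1, h2⟩ := hM _ _ hww' _ _ e1
      obtain ⟨h3, h4⟩ := hM _ _ hww' _ _ e2
      omega
    · obtain ⟨h1, h2⟩ := hM _ _ hww' _ _ e1
      obtain ⟨h3, h4⟩ := hM _ _ hww' _ _ e2
      omega
  refine ⟨F', hDR, ?_⟩
  intro m' n hmn
  rcases lt_or_gt_of_ne hmn with hlt | hgt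
  · exact hdisj m' n hlt
  · exact (hdisj n m' hgt).symm
end

section
/- Every tree T with at least three ends contains a double ray D such that some connected component of the graph obtained from T by deleting the edges of D has infinitely many ends, provided T has infinitely many ends. -/
open SimpleGraph

variable {V : Type*}

namespace TreeProof

variable {G : SimpleGraph V}

lemma exists_tail_avoid {f : ℕ → V} (hf : Function.Injective f) (S : Finset V) :
    ∃ b : ℕ, ∀ j, b ≤ j → f j ∉ S := by
  have hfin : {n | f n ∈ (S : Set V)}.Finite :=
    Set.Finite.preimage hf.injOn S.finite_toSet
  obtain ⟨b, hb⟩ := hfin.bddAbove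
  exact ⟨b + 1, fun j hj hmem => absurd (hb hmem) (by omega)⟩

def walkSeg (g : ℕ → V) (hg : ∀ n, G.Adj (g n) (g (n + 1))) (a : ℕ) :
    (m : ℕ) → G.Walk (g a) (g (a + m))
  | 0 => Walk.nil.copy rfl (congrArg g (by omega))
  | m + 1 => Walk.cons (hg a) ((walkSeg g hg (a + 1) m).copy rfl (congrArg g (by omega)))

lemma walkSeg_support (g : ℕ → V) (hg : ∀ n, G.Adj (g n) (g (n + 1))) (a m : ℕ) :
    (walkSeg g hg a m).support = (List.range' a (m + 1)).map g := by
  induction m generalizing a with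
  | zero => simp [walkSeg]
  | succ m ih =>
    rw [walkSeg, Walk.support_cons, Walk.support_copy, ih]
    rw [show m + 1 + 1 = (m+1) + 1 from rfl, List.range'_succ]
    simp [List.range'_succ]

lemma walkSeg_length (g : ℕ → V) (hg : ∀ n, G.Adj (g n) (g (n + 1))) (a m : ℕ) :
    (walkSeg g hg a m).length = m := by
  induction m generalizing a with
  | zero => simp [walkSeg]
  | succ m ih => rw [walkSeg]; simp [ih]

lemma walkSeg_isPath (g : ℕ → V) (hg : ∀ n, G.Adj (g n) (g (n + 1)))
    (hinj : Function.Injective g) (a m : ℕ) : (walkSeg g hg a m).IsPath := by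
  rw [Walk.isPath_def, walkSeg_support]
  exact (List.nodup_range' (h := by omega)).map hinj

def raySeg (g : ℕ → V) (hg : ∀ n, G.Adj (g n) (g (n + 1))) (a b : ℕ) : G.Walk (g a) (g b) :=
  if h : a ≤ b then (walkSeg g hg a (b - a)).copy rfl (congrArg g (by omega))
  else ((walkSeg g hg b (a - b)).copy rfl (congrArg g (by omega))).reverse

lemma raySeg_support_mem (g : ℕ → V) (hg : ∀ n, G.Adj (g n) (g (n + 1))) (a b : ℕ)
    {v : V} (hv : v ∈ (raySeg g hg a b).support) : ∃ j, (a ≤ j ∨ b ≤ j) ∧ v = g j := by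
  unfold raySeg at hv
  split_ifs at hv with h
  · rw [Walk.support_copy, walkSeg_support] at hv
    obtain ⟨j, hj, rfl⟩ := List.mem_map.1 hv
    obtain ⟨i, _, rfl⟩ := List.mem_range'.1 hj
    exact ⟨a + 1 * i, Or.inl (by omega), rfl⟩
  · rw [Walk.support_reverse, List.mem_reverse, Walk.support_copy, walkSeg_support] at hv
    obtain ⟨j, hj, rfl⟩ := List.mem_map.1 hv
    obtain ⟨i, _, rfl⟩ := List.mem_range'.1 hj
    exact ⟨b + 1 * i, Or.inr (by omega), rfl⟩

lemma rayEquiv_of_tail (G : SimpleGraph V) {f g : ℕ → V} (hf : Function.Injective f)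
    (hg : Function.Injective g) (d₁ d₂ : ℕ) (htail : ∀ n, f (d₁ + n) = g (d₂ + n)) :
    RayEquiv G f g := by
  intro S
  obtain ⟨b₁, h₁⟩ := exists_tail_avoid hf S
  obtain ⟨b₂, h₂⟩ := exists_tail_avoid hg S
  refine ⟨d₁ + (b₁ + b₂), d₂ + (b₁ + b₂), fun i hi => h₁ i (by omega),
    fun j hj => h₂ j (by omega), Walk.nil.copy rfl (htail (b₁ + b₂)), ?_⟩
  intro v hv
  rw [Walk.support_copy, Walk.support_nil, List.mem_singleton] at hv
  subst hv
  exact h₁ _ (by omega)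

lemma rayEquiv_symm {f g : ℕ → V} (h : RayEquiv G f g) : RayEquiv G g f := by
  intro S
  obtain ⟨a, b, hfa, hgb, w, hw⟩ := h S
  exact ⟨b, a, hgb, hfa, w.reverse, fun v hv =>
    hw v (by rwa [Walk.support_reverse, List.mem_reverse] at hv)⟩

lemma rayEquiv_trans {f g h : ℕ → V} (hg : ∀ n, G.Adj (g n) (g (n + 1)))
    (h1 : RayEquiv G f g) (h2 : RayEquiv G g h) : RayEquiv G f h := by
  intro S
  obtain ⟨a, b, hfa, hgb, w1, hw1⟩ := h1 S
  obtain ⟨b', c, hgb', hhc, w2, hw2⟩ := h2 S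
  refine ⟨a, c, hfa, hhc, w1.append ((raySeg g hg b b').append w2), ?_⟩
  intro v hv
  rcases (Walk.mem_support_append_iff _ _).1 hv with hv | hv
  · exact hw1 v hv
  rcases (Walk.mem_support_append_iff _ _).1 hv with hv | hv
  · obtain ⟨j, hj, rfl⟩ := raySeg_support_mem g hg b b' hv
    rcases hj with hj | hj
    · exact hgb j hj
    · exact hgb' j hj
  · exact hw2 v hv

lemma rayEquiv_of_le {G' : SimpleGraph V} (hle : G' ≤ G) {f g : ℕ → V}
    (h : RayEquiv G' f g) : RayEquiv G f g := by
  intro S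
  obtain ⟨a, b, hfa, hgb, w, hw⟩ := h S
  refine ⟨a, b, hfa, hgb, w.mapLe hle, ?_⟩
  intro v hv
  apply hw
  rw [Walk.mapLe, Walk.support_map] at hv
  obtain ⟨x, hx, rfl⟩ := List.mem_map.1 hv
  exact hx

lemma core (hT : G.IsTree) {gi gj : ℕ → V} (hi : IsRay G gi) (hj : IsRay G gj)
    (h0 : gi 0 = gj 0) {p q : ℕ} (hpq : gi p = gj q) :
    p = q ∧ ∀ n ≤ p, gi n = gj n := by
  have hpq' : gi (0 + p) = gj (0 + q) := by simpa using hpq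
  have hsupp : ((walkSeg gi hi.2 0 p).copy h0 hpq').support
      = ((walkSeg gj hj.2 0 q) : G.Walk _ _).support := by
    have hu := hT.existsUnique_path (gj 0) (gj (0 + q))
    have e1 : ((walkSeg gi hi.2 0 p).copy h0 hpq') = walkSeg gj hj.2 0 q :=
      hu.unique (by rw [Walk.isPath_copy]; exact walkSeg_isPath _ _ hi.1 0 p)
        (walkSeg_isPath _ _ hj.1 0 q)
    rw [e1]
  rw [Walk.support_copy, walkSeg_support, walkSeg_support] at hsupp
  have hlen : p + 1 = q + 1 := by
    have := congrArg List.length hsupp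
    simpa using this
  have hp : p = q := by omega
  subst hp
  refine ⟨rfl, fun n hn => ?_⟩
  have h1 : (List.map gi (List.range' 0 (p + 1)))[n]'(by simpa using by omega)
      = (List.map gj (List.range' 0 (p + 1)))[n]'(by simpa using by omega) :=
    List.getElem_of_eq hsupp _
  simpa using h1

lemma support_eq_map_getVert {u v : V} (w : G.Walk u v) :
    w.support = (List.range (w.length + 1)).map w.getVert := by
  induction w with
  | nil => simp [Walk.getVert]
  | cons h p ih =>
    have h1 : (Walk.cons h p).getVert ∘ Nat.succ = p.getVert := rfl
    rw [Walk.support_cons, Walk.length_cons]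
    conv_rhs => rw [List.range_succ_eq_map, List.map_cons, List.map_map, h1]
    rw [ih, Walk.getVert_zero]

lemma isPath_getVert_inj {u v : V} {w : G.Walk u v} (hw : w.IsPath) {a b : ℕ}
    (ha : a ≤ w.length) (hb : b ≤ w.length) (hab : w.getVert a = w.getVert b) : a = b := by
  have hnd := hw.support_nodup
  rw [support_eq_map_getVert] at hnd
  have h1 : ((List.range (w.length + 1)).map w.getVert)[a]'(by simpa using by omega)
      = ((List.range (w.length + 1)).map w.getVert)[b]'(by simpa using by omega) := by
    simpa using hab
  have := hnd.getElem_inj_iff.1 h1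
  simpa using this

lemma exists_rooted_ray (hT : G.IsTree) (r : V) {f : ℕ → V} (hf : IsRay G f) :
    ∃ g : ℕ → V, IsRay G g ∧ g 0 = r ∧ ∃ d₁ d₂ : ℕ, ∀ n, g (d₁ + n) = f (d₂ + n) := by
  classical
  obtain ⟨w0⟩ := hT.isConnected.preconnected r (f 0)
  set p : G.Path r (f 0) := w0.toPath with hp
  have hM0 : f 0 ∈ p.1.support := by
    have := p.1.end_mem_support
    simpa using this
  have hMfin : {n | f n ∈ p.1.support}.Finite :=
    Set.Finite.preimage hf.1.injOn (p.1.support.finite_toSet)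
  obtain ⟨t, htM, htm⟩ : ∃ t ∈ {n | f n ∈ p.1.support}, ∀ n ∈ {n | f n ∈ p.1.support}, t ≤ n → t = n := by
    obtain ⟨t, ht, hm⟩ := Set.Finite.exists_maximalFor id _ hMfin ⟨0, hM0⟩
    exact ⟨t, ht, fun n hn h => le_antisymm h (hm hn h)⟩
  have htmax : ∀ n, f n ∈ p.1.support → n ≤ t := by
    intro n hn
    by_contra hlt
    have hle : t ≤ n := by omega
    have h2 : t = n := htm n hn hle
    omega
  set q : G.Walk r (f t) := p.1.takeUntil (f t) htM with hqdef
  have hq : q.IsPath := p.2.takeUntil _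
  set L := q.length with hL
  have hnot : ∀ n, 1 ≤ n → f (t + n) ∉ q.support := by
    intro n hn hmem
    have : f (t + n) ∈ p.1.support := Walk.support_takeUntil_subset _ _ hmem
    have := htmax _ this
    omega
  refine ⟨fun n => if n < L then q.getVert n else f (t + (n - L)), ⟨⟨?_, ?_⟩, ?_, L, t, ?_⟩⟩
  · -- injective
    intro a b hab
    simp only at hab
    by_cases ha : a < L <;> by_cases hb : b < L
    · rw [if_pos ha, if_pos hb] at hab
      exact isPath_getVert_inj hq (by omega) (by omega) hab
    · rw [if_pos ha, if_neg hb] at hab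
      by_cases hbL : b = L
      · subst hbL
        simp only [Nat.sub_self, Nat.add_zero] at hab
        have hab' : q.getVert a = q.getVert q.length := by rw [q.getVert_length]; exact hab
        have := isPath_getVert_inj hq (by omega) le_rfl hab'
        omega
      · exfalso
        refine hnot (b - L) (by omega) ?_
        rw [← hab]
        rw [Walk.mem_support_iff_exists_getVert]
        exact ⟨a, rfl, by omega⟩
    · rw [if_neg ha, if_pos hb] at hab
      by_cases haL : a = L
      · subst haL
        simp only [Nat.sub_self, Nat.add_zero] at hab
        have hab' : q.getVert b = q.getVert q.length := by rw [q.getVert_length]; exact hab.symm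
        have := isPath_getVert_inj hq (by omega) le_rfl hab'
        omega
      · exfalso
        refine hnot (a - L) (by omega) ?_
        rw [hab]
        rw [Walk.mem_support_iff_exists_getVert]
        exact ⟨b, rfl, by omega⟩
    · rw [if_neg ha, if_neg hb] at hab
      have := hf.1 hab
      omega
  · -- adjacency
    intro n
    simp only
    by_cases h1 : n + 1 < L
    · rw [if_pos (by omega), if_pos h1]
      exact q.adj_getVert_succ (by omega)
    · by_cases h2 : n < L
      · -- n + 1 = L
        have hnL : n + 1 = L := by omega
        rw [if_pos h2, if_neg (by omega)]
        have : f (t + (n + 1 - L)) = q.getVert (n + 1) := by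
          rw [hnL, Nat.sub_self, Nat.add_zero, q.getVert_length]
        rw [this]
        exact q.adj_getVert_succ (by omega)
      · rw [if_neg h2, if_neg (by omega)]
        have harith : n + 1 - L = (n - L) + 1 := by omega
        rw [harith, ← Nat.add_assoc]
        exact hf.2 (t + (n - L))
  · -- g 0 = r
    show (if 0 < L then q.getVert 0 else f (t + (0 - L))) = r
    by_cases h0 : 0 < L
    · rw [if_pos h0]; exact q.getVert_zero
    · rw [if_neg h0]
      have h1 : r = f t := Walk.eq_of_length_eq_zero (p := q) (by omega)
      simp [← h1]
  · -- tail
    intro n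
    show (if L + n < L then q.getVert (L + n) else f (t + (L + n - L))) = f (t + n)
    rw [if_neg (by omega)]
    congr 1
    omega

section Extraction

variable (K : ℕ → ℕ → ℕ)

def ExtrConcl : Prop :=
  ∃ (a b : ℕ) (σ : ℕ → ℕ) (t : ℕ), a ≠ b ∧ Function.Injective σ ∧
    (∀ n, σ n ≠ a ∧ σ n ≠ b) ∧ K a b ≤ t ∧ ∀ n, K b (σ n) = t ∧ K a (σ n) = K a b

lemma unbounded_case
    (Kult : ∀ i j l, i ≠ j → j ≠ l → i ≠ l → K i j < K j l → K i l = K i j)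
    (Ksymm : ∀ i j, K i j = K j i)
    (a1 : ℕ) (T : Set ℕ) (ha1 : a1 ∉ T)
    (hfib : ∀ t, {i | i ∈ T ∧ K a1 i = t}.Finite) (hT : T.Infinite) : ExtrConcl K := by
  classical
  have hstep : ∀ N : ℕ, ∃ i, i ∈ T ∧ N < K a1 i := by
    intro N
    have hfin : {i | i ∈ T ∧ K a1 i ≤ N}.Finite := by
      have : {i | i ∈ T ∧ K a1 i ≤ N} ⊆ ⋃ t ∈ Finset.range (N + 1), {i | i ∈ T ∧ K a1 i = t} := by
        intro i ⟨hi1, hi2⟩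
        simp only [Set.mem_iUnion, Finset.mem_range]
        exact ⟨K a1 i, by omega, hi1, rfl⟩
      exact Set.Finite.subset (Set.Finite.biUnion (Finset.range (N + 1)).finite_toSet fun t _ => hfib t) this
    obtain ⟨i, hiT, hik⟩ := (hT.diff hfin).nonempty
    exact ⟨i, hiT, by simpa [hiT] using hik⟩
  choose next hnext1 hnext2 using hstep
  let σ' : ℕ → ℕ := fun n => Nat.rec (next 0) (fun _ prev => next (K a1 prev)) n
  have hmem : ∀ n, σ' n ∈ T := by
    intro n
    cases n with
    | zero => exact hnext1 0
    | succ m => exact hnext1 _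
  have hmono : StrictMono fun n => K a1 (σ' n) :=
    strictMono_nat_of_lt_succ fun n => hnext2 (K a1 (σ' n))
  have hne : ∀ n, σ' n ≠ a1 := fun n hn => ha1 (hn ▸ hmem n)
  have hinj : Function.Injective σ' := fun m n hmn => hmono.injective (by rw [hmn])
  have hcross : ∀ m n, m < n → K (σ' m) (σ' n) = K a1 (σ' m) := by
    intro m n hmn
    have h1 : K (σ' m) a1 < K a1 (σ' n) := by
      rw [Ksymm]
      exact hmono hmn
    have := Kult (σ' m) a1 (σ' n) (hne m) (fun hc => hne n hc.symm)
      (fun hc => absurd (hinj hc) (by omega)) h1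
    rw [this, Ksymm]
  refine ⟨σ' 0, σ' 1, fun n => σ' (n + 2), K a1 (σ' 1), ?_, ?_, ?_, ?_, ?_⟩
  · intro hc
    have h9 : (0 : ℕ) = 1 := hinj hc
    omega
  · intro m n hmn
    simp only at hmn
    have h9 : m + 2 = n + 2 := hinj hmn
    omega
  · intro n
    constructor
    · intro hc
      simp only at hc
      have h9 : n + 2 = 0 := hinj hc
      omega
    · intro hc
      simp only at hc
      have h9 : n + 2 = 1 := hinj hc
      omega
  · rw [hcross 0 1 (by omega)]
    exact (hmono (by omega : (0:ℕ) < 1)).le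
  · intro n
    constructor
    · exact hcross 1 (n + 2) (by omega)
    · rw [hcross 0 (n + 2) (by omega), hcross 0 1 (by omega)]

lemma extraction
    (Kult : ∀ i j l, i ≠ j → j ≠ l → i ≠ l → K i j < K j l → K i l = K i j)
    (Kmono : ∀ i j l, i ≠ j → j ≠ l → i ≠ l → K i j = K j l → K i j ≤ K i l)
    (Ksymm : ∀ i j, K i j = K j i) : ExtrConcl K := by
  classical
  by_cases hc1 : ∃ t, {i : ℕ | 0 < i ∧ K 0 i = t}.Infinite
  · obtain ⟨t0, ht0⟩ := hc1
    set a1 : ℕ := ((ht0.natEmbedding) 0 : ℕ) with ha1def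
    have ha1 : 0 < a1 ∧ K 0 a1 = t0 := ((ht0.natEmbedding) 0).2
    by_cases hc2 : ∃ t, {i : ℕ | (0 < i ∧ K 0 i = t0) ∧ i ≠ a1 ∧ K a1 i = t}.Infinite
    · obtain ⟨t1, ht1⟩ := hc2
      let e := ht1.natEmbedding
      have he : ∀ n, (0 < (e n : ℕ) ∧ K 0 (e n) = t0) ∧ (e n : ℕ) ≠ a1 ∧ K a1 (e n) = t1 :=
        fun n => (e n).2
      have heinj : Function.Injective fun n => (e n : ℕ) := by
        intro m n hmn
        exact e.injective (Subtype.ext hmn)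
      refine ⟨0, a1, fun n => (e n : ℕ), t1, ha1.1.ne, heinj, ?_, ?_, ?_⟩
      · exact fun n => ⟨(he n).1.1.ne', (he n).2.1⟩
      · -- K 0 a1 = t0 ≤ t1
        have h1 := Kmono a1 0 (e 0 : ℕ) ha1.1.ne' (he 0).1.1.ne (Ne.symm (he 0).2.1)
          (by rw [Ksymm a1 0, ha1.2, (he 0).1.2])
        rw [Ksymm 0 a1, ← (he 0).2.2]
        exact h1
      · intro n
        exact ⟨(he n).2.2, by rw [(he n).1.2, ha1.2]⟩
    · push_neg at hc2
      have hfib : ∀ t, {i | i ∈ {i : ℕ | (0 < i ∧ K 0 i = t0) ∧ i ≠ a1} ∧ K a1 i = t}.Finite := by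
        intro t
        have := hc2 t
        convert this using 1
        ext i
        simp only [Set.mem_setOf_eq, Set.mem_sep_iff]
        tauto
      have hTinf : {i : ℕ | (0 < i ∧ K 0 i = t0) ∧ i ≠ a1}.Infinite := by
        have h2 : {i : ℕ | 0 < i ∧ K 0 i = t0} \ {a1} ⊆ {i : ℕ | (0 < i ∧ K 0 i = t0) ∧ i ≠ a1} := by
          intro i hi
          exact ⟨hi.1, hi.2⟩
        exact (ht0.diff (Set.finite_singleton a1)).mono h2
      exact unbounded_case K Kult Ksymm a1 _ (fun hc => hc.2 rfl) hfib hTinf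
  · push_neg at hc1
    have hfib : ∀ t, {i | i ∈ {i : ℕ | 0 < i} ∧ K 0 i = t}.Finite := by
      intro t
      have := hc1 t
      exact this
    exact unbounded_case K Kult Ksymm 0 {i : ℕ | 0 < i} (by simp) hfib
      (Set.infinite_of_not_bddAbove (by
        intro ⟨b, hb⟩
        have := hb (show b + 1 ∈ {i : ℕ | 0 < i} by simp)
        omega))

end Extraction

end TreeProof

open TreeProof

/-- A tree with infinitely many ends contains a double ray `D` such that some
connected component of the tree minus the edges of `D` has infinitely many ends. -/
theorem stmt_4 (G : SimpleGraph V) (hT : G.IsTree)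
    (h : ∃ F : ℕ → ℕ → V, (∀ i, IsRay G (F i)) ∧
      Pairwise fun i j => ¬ RayEquiv G (F i) (F j)) :
    ∃ D : ℤ → V, IsDoubleRay G D ∧
      ∃ c : (G.deleteEdges (drEdges D)).ConnectedComponent,
        ∃ F : ℕ → ℕ → V,
          (∀ i, IsRay (G.deleteEdges (drEdges D)) (F i) ∧
            (G.deleteEdges (drEdges D)).connectedComponentMk (F i 0) = c) ∧
          Pairwise fun i j => ¬ RayEquiv (G.deleteEdges (drEdges D)) (F i) (F j) := by
  classical
  obtain ⟨F, hFray, hFne⟩ := h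
  set r : V := F 0 0 with hrdef
  have hex : ∀ i, ∃ g : ℕ → V, IsRay G g ∧ g 0 = r ∧ ∃ d₁ d₂ : ℕ, ∀ n, g (d₁ + n) = F i (d₂ + n) :=
    fun i => exists_rooted_ray hT r (hFray i)
  choose g hg hg0 d₁ d₂ hgtail using hex
  -- each g i shares a tail with F i, hence is RayEquiv to it
  have hgF : ∀ i, RayEquiv G (g i) (F i) :=
    fun i => rayEquiv_of_tail G (hg i).1 (hFray i).1 (d₁ i) (d₂ i) (hgtail i)
  -- branch points
  have hBr : ∀ i j, i ≠ j → ∃ k, (∀ n ≤ k, g i n = g j n) ∧ g i (k + 1) ≠ g j (k + 1) := by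
    intro i j hij
    have hne : ¬ ∀ n, g i n = g j n := by
      intro hall
      have h1 : RayEquiv G (g i) (g j) :=
        rayEquiv_of_tail G (hg i).1 (hg j).1 0 0 (fun n => hall (0 + n))
      have h2 : RayEquiv G (F i) (g j) :=
        rayEquiv_trans (hg i).2 (rayEquiv_symm (hgF i)) h1
      have h3 : RayEquiv G (F i) (F j) := rayEquiv_trans (hg j).2 h2 (hgF j)
      exact hFne hij h3
    push_neg at hne
    have hm : ∃ m, g i m ≠ g j m := hne
    have hm0 : Nat.find hm ≠ 0 := by
      intro hc
      have := Nat.find_spec hm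
      rw [hc] at this
      exact this (by rw [hg0 i, hg0 j])
    refine ⟨Nat.find hm - 1, fun n hn => ?_, ?_⟩
    · by_contra hc
      have := Nat.find_min hm (m := n) (by omega)
      exact this hc
    · have := Nat.find_spec hm
      have he : Nat.find hm - 1 + 1 = Nat.find hm := by omega
      rw [he]
      exact this
  set K : ℕ → ℕ → ℕ := fun i j => if h : i ≠ j then (hBr i j h).choose else 0 with hKdef
  have hKagree : ∀ i j, i ≠ j → ∀ n ≤ K i j, g i n = g j n := by
    intro i j hij n hn
    have hKeq : K i j = (hBr i j hij).choose := by simp only [hKdef, dif_pos hij]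
    rw [hKeq] at hn
    exact (hBr i j hij).choose_spec.1 n hn
  have hKdiv' : ∀ i j, (hij : i ≠ j) → g i (K i j + 1) ≠ g j (K i j + 1) := by
    intro i j hij
    have hKeq : K i j = (hBr i j hij).choose := by simp only [hKdef, dif_pos hij]
    rw [hKeq]
    exact (hBr i j hij).choose_spec.2
  -- full divergence from the tree structure
  have hKdiv : ∀ i j, i ≠ j → ∀ p q, K i j < p → K i j < q → g i p ≠ g j q := by
    intro i j hij p q hp hq hpq
    obtain ⟨hpq', hagree⟩ := core hT (hg i) (hg j) (by rw [hg0 i, hg0 j]) hpq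
    exact hKdiv' i j hij (hagree (K i j + 1) (by omega))
  have hKuniq : ∀ i j k, i ≠ j → (∀ n ≤ k, g i n = g j n) → g i (k + 1) ≠ g j (k + 1) →
      k = K i j := by
    intro i j k hij hagr hdiv
    rcases lt_trichotomy k (K i j) with hlt | heq | hgt
    · exact absurd (hKagree i j hij (k + 1) (by omega)) hdiv
    · exact heq
    · exact absurd (hagr (K i j + 1) (by omega)) (hKdiv' i j hij)
  have hKsymm : ∀ i j, K i j = K j i := by
    intro i j
    by_cases hij : i = j
    · rw [hij]
    · exact hKuniq j i (K i j) (Ne.symm hij)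
        (fun n hn => (hKagree i j hij n hn).symm)
        (fun hc => hKdiv' i j hij hc.symm)
  have hKult : ∀ i j l, i ≠ j → j ≠ l → i ≠ l → K i j < K j l → K i l = K i j := by
    intro i j l hij hjl hil hlt
    refine (hKuniq i l (K i j) hil (fun n hn => ?_) (fun hc => ?_)).symm
    · rw [hKagree i j hij n hn]
      exact hKagree j l hjl n (by omega)
    · rw [← hKagree j l hjl (K i j + 1) (by omega)] at hc
      exact hKdiv' i j hij hc
  have hKmono : ∀ i j l, i ≠ j → j ≠ l → i ≠ l → K i j = K j l → K i j ≤ K i l := by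
    intro i j l hij hjl hil heq
    by_contra hlt
    apply hKdiv' i l hil
    rw [hKagree i j hij (K i l + 1) (by omega)]
    exact hKagree j l hjl (K i l + 1) (by omega)
  obtain ⟨a, b, σ, t, hab, hσinj, hσne, hKabt, hσspec⟩ := extraction K hKult hKmono hKsymm
  set Kab := K a b with hKabdef
  -- the double ray
  set D : ℤ → V := fun z => if 0 ≤ z then g b (Kab + z.toNat) else g a (Kab + (-z).toNat)
    with hDdef
  have hDnn : ∀ z : ℤ, 0 ≤ z → D z = g b (Kab + z.toNat) := fun z hz => if_pos hz
  have hDneg : ∀ z : ℤ, z < 0 → D z = g a (Kab + (-z).toNat) := fun z hz => if_neg (by omega)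
  have hagab : ∀ n, n ≤ Kab → g a n = g b n := fun n hn => hKagree a b hab n hn
  have hdivab : ∀ p q, Kab < p → Kab < q → g a p ≠ g b q := fun p q => hKdiv a b hab p q
  -- facts about the rays σ n
  have hagb : ∀ n m, m ≤ t → g b m = g (σ n) m := by
    intro n m hm
    have := (hσspec n).1
    exact hKagree b (σ n) (Ne.symm (hσne n).2) m (by omega)
  have hdivb : ∀ n p q, t < p → t < q → g b p ≠ g (σ n) q := by
    intro n p q hp hq
    have := (hσspec n).1
    exact hKdiv b (σ n) (Ne.symm (hσne n).2) p q (by omega) (by omega)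
  have haga : ∀ n m, m ≤ Kab → g a m = g (σ n) m := by
    intro n m hm
    have := (hσspec n).2
    exact hKagree a (σ n) (Ne.symm (hσne n).1) m (by omega)
  have hdiva : ∀ n p q, Kab < p → Kab < q → g a p ≠ g (σ n) q := by
    intro n p q hp hq
    have := (hσspec n).2
    exact hKdiv a (σ n) (Ne.symm (hσne n).1) p q (by omega) (by omega)
  -- D is a double ray
  have hDray : IsDoubleRay G D := by
    constructor
    · intro z w hzw
      rcases le_or_gt 0 z with hz | hz <;> rcases le_or_gt 0 w with hw | hw
      · rw [hDnn z hz, hDnn w hw] at hzw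
        have := (hg b).1 hzw
        omega
      · rw [hDnn z hz, hDneg w hw] at hzw
        exfalso
        rcases Nat.eq_zero_or_pos z.toNat with h0 | h0
        · rw [h0] at hzw
          have h1 : g a Kab = g a (Kab + (-w).toNat) := by
            rw [Nat.add_zero, ← hagab Kab le_rfl] at hzw
            exact hzw
          have := (hg a).1 h1
          omega
        · exact hdivab (Kab + (-w).toNat) (Kab + z.toNat) (by omega) (by omega) hzw.symm
      · rw [hDneg z hz, hDnn w hw] at hzw
        exfalso
        rcases Nat.eq_zero_or_pos w.toNat with h0 | h0
        · rw [h0] at hzw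
          have h1 : g a Kab = g a (Kab + (-z).toNat) := by
            rw [Nat.add_zero, ← hagab Kab le_rfl] at hzw
            exact hzw.symm
          have := (hg a).1 h1
          omega
        · exact hdivab (Kab + (-z).toNat) (Kab + w.toNat) (by omega) (by omega) hzw
      · rw [hDneg z hz, hDneg w hw] at hzw
        have := (hg a).1 hzw
        omega
    · intro z
      rcases le_or_gt 0 z with hz | hz
      · rw [hDnn z hz, hDnn (z + 1) (by omega)]
        have he : (z + 1).toNat = z.toNat + 1 := by omega
        rw [he, ← Nat.add_assoc]
        exact (hg b).2 (Kab + z.toNat)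
      · by_cases hz1 : z = -1
        · rw [hDneg z (by omega), hDnn (z + 1) (by omega)]
          have e1 : (-z).toNat = 1 := by omega
          have e2 : (z + 1).toNat = 0 := by omega
          rw [e1, e2]
          have h1 : g b (Kab + 0) = g a (Kab + 0) := (hagab (Kab + 0) (by omega)).symm
          rw [h1]
          have := ((hg a).2 Kab).symm
          simpa using this
        · rw [hDneg z (by omega), hDneg (z + 1) (by omega)]
          have e1 : (-z).toNat = (-(z + 1)).toNat + 1 := by omega
          rw [e1, ← Nat.add_assoc]
          exact ((hg a).2 (Kab + (-(z + 1)).toNat)).symm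
  -- vertices of the new rays beyond t avoid D entirely
  have hnotinD : ∀ j p, t < p → ∀ z : ℤ, g (σ j) p ≠ D z := by
    intro j p hp z
    rcases le_or_gt 0 z with hz | hz
    · rw [hDnn z hz]
      intro hc
      rcases le_or_gt (Kab + z.toNat) t with hle | hlt
      · rw [hagb j (Kab + z.toNat) hle] at hc
        have := (hg (σ j)).1 hc
        omega
      · exact hdivb j (Kab + z.toNat) p hlt hp hc.symm
    · rw [hDneg z hz]
      intro hc
      exact hdiva j (Kab + (-z).toNat) p (by omega) (by omega) hc.symm
  have hedge : ∀ j n, t ≤ n → s(g (σ j) n, g (σ j) (n + 1)) ∉ drEdges D := by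
    intro j n hn hmem
    obtain ⟨z, hz⟩ := hmem
    rw [Sym2.eq_iff] at hz
    rcases hz with ⟨_, h2⟩ | ⟨_, h2⟩
    · exact hnotinD j (n + 1) (by omega) (z + 1) h2
    · exact hnotinD j (n + 1) (by omega) z h2
  have haux : ∀ p n, G.Adj (g (σ p) (t + n)) (g (σ p) (t + (n + 1))) := by
    intro p n
    rw [show t + (n + 1) = (t + n) + 1 by omega]
    exact (hg (σ p)).2 (t + n)
  have hinjF' : ∀ p, Function.Injective (fun n => g (σ p) (t + n)) := by
    intro p x y hxy
    simp only at hxy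
    have := (hg (σ p)).1 hxy
    omega
  have hEq : ∀ p, RayEquiv G (F (σ p)) (fun n => g (σ p) (t + n)) := by
    intro p
    refine rayEquiv_of_tail G (hFray (σ p)).1 (hinjF' p) (d₂ (σ p) + t) (d₁ (σ p)) ?_
    intro n
    show F (σ p) (d₂ (σ p) + t + n) = g (σ p) (t + (d₁ (σ p) + n))
    rw [show t + (d₁ (σ p) + n) = d₁ (σ p) + (t + n) by omega, hgtail (σ p) (t + n)]
    congr 1
    omega
  refine ⟨D, hDray, (G.deleteEdges (drEdges D)).connectedComponentMk (g b t),
    fun j n => g (σ j) (t + n), fun i => ⟨⟨hinjF' i, ?_⟩, ?_⟩, ?_⟩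
  · -- adjacency in the deleted graph
    intro n
    rw [SimpleGraph.deleteEdges_adj]
    refine ⟨haux i n, ?_⟩
    have := hedge i (t + n) (by omega)
    rw [show t + n + 1 = t + (n + 1) by omega] at this
    exact this
  · -- same component
    show (G.deleteEdges (drEdges D)).connectedComponentMk (g (σ i) (t + 0)) = _
    congr 1
    rw [Nat.add_zero]
    exact (hagb i t le_rfl).symm
  · -- pairwise inequivalent
    intro i j hij hRE
    have hσij : σ i ≠ σ j := fun hc => hij (hσinj hc)
    have hRE1 : RayEquiv G (fun n => g (σ i) (t + n)) (fun n => g (σ j) (t + n)) :=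
      rayEquiv_of_le (G.deleteEdges_le _) hRE
    have hchain1 : RayEquiv G (F (σ i)) (fun n => g (σ j) (t + n)) :=
      rayEquiv_trans (haux i) (hEq i) hRE1
    have hchain2 : RayEquiv G (F (σ i)) (F (σ j)) :=
      rayEquiv_trans (haux j) hchain1 (rayEquiv_symm (hEq j))
    exact hFne hσij hchain2
end

section
/- Any connected graph with infinitely many ends contains infinitely many pairwise edge-disjoint double rays. -/
open SimpleGraph

variable {V : Type*}

variable {G : SimpleGraph V}

lemma isRay_tail {f : ℕ → V} (h : IsRay G f) (s : ℕ) : IsRay G (fun k => f (k + s)) := by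
  constructor
  · intro a b hab
    have := h.1 hab
    omega
  · intro n
    have := h.2 (n + s)
    simpa [Nat.add_right_comm] using this

lemma finite_pre {f : ℕ → V} (hf : Function.Injective f) {S : Set V} (hS : S.Finite) :
    {i | f i ∈ S}.Finite := by
  have : {i | f i ∈ S} = f ⁻¹' S := rfl
  rw [this]
  exact Set.Finite.preimage hf.injOn hS

lemma exists_bound_of_finite {S : Set ℕ} (h : S.Finite) : ∃ N, ∀ i, N ≤ i → i ∉ S := by
  obtain ⟨N, hN⟩ := h.bddAbove
  exact ⟨N + 1, fun i hi hmem => by have := hN hmem; omega⟩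

lemma rayEquiv_of_infinite_inter {f g : ℕ → V} (hf : IsRay G f) (hg : IsRay G g)
    (h : (Set.range f ∩ Set.range g).Infinite) : RayEquiv G f g := by
  intro S
  obtain ⟨Af, hAf⟩ := exists_bound_of_finite (finite_pre hf.1 S.finite_toSet)
  obtain ⟨Bg, hBg⟩ := exists_bound_of_finite (finite_pre hg.1 S.finite_toSet)
  have hbad : (f '' Set.Iio Af ∪ g '' Set.Iio Bg).Finite :=
    ((Set.finite_Iio _).image f).union ((Set.finite_Iio _).image g)
  obtain ⟨v, hv⟩ := (h.diff hbad).nonempty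
  obtain ⟨⟨⟨a, ha⟩, ⟨b, hb⟩⟩, hnb⟩ := hv
  have haA : Af ≤ a := by
    by_contra hcon
    exact hnb (Or.inl ⟨a, Set.mem_Iio.mpr (by omega), ha⟩)
  have hbB : Bg ≤ b := by
    by_contra hcon
    exact hnb (Or.inr ⟨b, Set.mem_Iio.mpr (by omega), hb⟩)
  refine ⟨a, b, fun i hi => hAf i (le_trans haA hi), fun j hj => hBg j (le_trans hbB hj), ?_⟩
  have heq : f a = g b := by rw [ha, hb]
  refine ⟨(Walk.nil : G.Walk (f a) (f a)).copy rfl heq, ?_⟩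
  intro x hx
  simp only [Walk.support_copy, Walk.support_nil, List.mem_singleton] at hx
  rw [hx]
  exact hAf a haA

lemma getVert_inj_of_isPath : ∀ {x y : V} (p : G.Walk x y), p.IsPath →
    ∀ i j, i ≤ p.length → j ≤ p.length → p.getVert i = p.getVert j → i = j := by
  intro x y p
  induction p with
  | nil => intro _ i j hi hj _; simp at hi hj; omega
  | cons hadj q ih =>
    intro hp i j hi hj hij
    rw [Walk.cons_isPath_iff] at hp
    match i, j with
    | 0, 0 => rfl
    | 0, (j+1) =>
      exfalso
      simp only [Walk.getVert_zero, Walk.getVert_cons_succ] at hij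
      exact hp.2 (Walk.mem_support_iff_exists_getVert.2 ⟨j, hij.symm, by simpa using hj⟩)
    | (i+1), 0 =>
      exfalso
      simp only [Walk.getVert_zero, Walk.getVert_cons_succ] at hij
      exact hp.2 (Walk.mem_support_iff_exists_getVert.2 ⟨i, hij, by simpa using hi⟩)
    | (i+1), (j+1) =>
      simp only [Walk.getVert_cons_succ] at hij
      have := ih hp.1 i j (by simpa using hi) (by simpa using hj) hij
      omega

lemma exists_firstHit {A : Set V} : ∀ {x y : V} (w : G.Walk x y), y ∈ A →
    ∃ (e : V) (p : G.Walk x e), e ∈ A ∧ (∀ z ∈ p.support, z ∈ A → z = e) ∧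
      (∀ z ∈ p.support, z ∈ w.support) := by
  intro x y w
  induction w with
  | nil =>
    intro hy
    exact ⟨_, Walk.nil, hy, by simp, by simp⟩
  | @cons a c y hadj q ih =>
    intro hy
    by_cases ha : a ∈ A
    · exact ⟨a, Walk.nil, ha, by simp, by simp⟩
    · obtain ⟨e, p, he, hp1, hp2⟩ := ih hy
      refine ⟨e, Walk.cons hadj p, he, ?_, ?_⟩
      · intro z hz hzA
        simp only [Walk.support_cons, List.mem_cons] at hz
        rcases hz with hz | hz
        · exact absurd (hz ▸ hzA) ha
        · exact hp1 z hz hzA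
      · intro z hz
        rw [Walk.support_cons] at hz ⊢
        simp only [List.mem_cons] at hz ⊢
        rcases hz with hz | hz
        · exact Or.inl hz
        · exact Or.inr (hp2 z hz)

lemma exists_lastExit {B : Set V} {x y : V} (w : G.Walk x y) (hx : x ∈ B) :
    ∃ (u : V) (p : G.Walk u y), u ∈ B ∧ (∀ z ∈ p.support, z ∈ B → z = u) ∧
      (∀ z ∈ p.support, z ∈ w.support) := by
  obtain ⟨u, p, hu, hp1, hp2⟩ := exists_firstHit (A := B) w.reverse (by simpa using hx)
  refine ⟨u, p.reverse, hu, ?_, ?_⟩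
  · intro z hz; exact hp1 z (by simpa using hz)
  · intro z hz
    have := hp2 z (by simpa using hz)
    simpa using this


lemma exists_connector (hc : G.Connected) {A B : Set V}
    (hdisj : ∀ v, v ∈ A → v ∈ B → False) {a0 b0 : V} (ha0 : a0 ∈ A) (hb0 : b0 ∈ B) :
    ∃ (e u : V) (p : G.Walk e u), e ∈ A ∧ u ∈ B ∧ p.IsPath ∧ 1 ≤ p.length ∧
      (∀ z ∈ p.support, z ∈ A → z = e) ∧ (∀ z ∈ p.support, z ∈ B → z = u) := by
  classical
  obtain ⟨w⟩ := hc.preconnected b0 a0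
  obtain ⟨e, p1, he, hp1A, hp1sub⟩ := exists_firstHit (A := A) w ha0
  obtain ⟨u, p2, hu, hp2B, hp2sub⟩ := exists_lastExit (B := B) p1 hb0
  have hp2A : ∀ z ∈ p2.support, z ∈ A → z = e := fun z hz => hp1A z (hp2sub z hz)
  refine ⟨e, u, p2.bypass.reverse, he, hu, p2.bypass_isPath.reverse, ?_, ?_, ?_⟩
  · by_contra hlen
    have h0 : p2.bypass.reverse.length = 0 := by omega
    have heu : e = u := (Walk.eq_of_length_eq_zero h0)
    exact hdisj e he (heu ▸ hu)
  · intro z hz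
    exact hp2A z (p2.support_bypass_subset (by simpa using hz))
  · intro z hz
    exact hp2B z (p2.support_bypass_subset (by simpa using hz))

lemma splice_ray {e u : V} (p : G.Walk e u) (hp : p.IsPath) (hL : 1 ≤ p.length)
    (T : ℕ → V) (hT : IsRay G T) (hTu : T 0 = u)
    (hsep : ∀ z ∈ p.support, z ∈ Set.range T → z = u)
    (A : Set V) (hpA : ∀ z ∈ p.support, z ∈ A → z = e) (hTA : ∀ v ∈ Set.range T, v ∉ A) :
    ∃ β : ℕ → V, IsRay G β ∧ β 0 = e ∧ (∀ k, β (p.length + k) = T k) ∧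
      (∀ v ∈ Set.range β, v ∈ A → v = e) := by
  classical
  set L := p.length with hLdef
  refine ⟨fun i => if i < L then p.getVert i else T (i - L), ?_, ?_, ?_, ?_⟩
  · constructor
    · intro i j hij
      simp only at hij
      split_ifs at hij with hi hj hj
      · exact getVert_inj_of_isPath p hp i j (by omega) (by omega) hij
      · exfalso
        have hmem : p.getVert i ∈ p.support := Walk.mem_support_iff_exists_getVert.2 ⟨i, rfl, by omega⟩
        have : p.getVert i = u := hsep _ hmem ⟨j - L, hij.symm⟩
        have hu' : p.getVert L = u := Walk.getVert_length p
        have := getVert_inj_of_isPath p hp i L (by omega) (le_refl _) (by rw [this, hu'])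
        omega
      · exfalso
        have hmem : p.getVert j ∈ p.support := Walk.mem_support_iff_exists_getVert.2 ⟨j, rfl, by omega⟩
        have : p.getVert j = u := hsep _ hmem ⟨i - L, hij⟩
        have hu' : p.getVert L = u := Walk.getVert_length p
        have := getVert_inj_of_isPath p hp j L (by omega) (le_refl _) (by rw [this, hu'])
        omega
      · have := hT.1 hij
        omega
    · intro i
      simp only
      by_cases h1 : i + 1 < L
      · rw [if_pos (by omega : i < L), if_pos h1]
        exact p.adj_getVert_succ (by omega)
      · by_cases h2 : i < L
        · have hiL : i + 1 = L := by omega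
          rw [if_pos h2, if_neg (by omega)]
          have : T (i + 1 - L) = p.getVert (i + 1) := by
            rw [hiL]
            simp only [Nat.sub_self]
            rw [hTu]
            exact (Walk.getVert_length p).symm
          rw [this]
          exact p.adj_getVert_succ (by omega)
        · rw [if_neg h2, if_neg (by omega)]
          have : i + 1 - L = (i - L) + 1 := by omega
          rw [this]
          exact hT.2 (i - L)
  · simp only [if_pos (by omega : 0 < L)]
    exact Walk.getVert_zero p
  · intro k
    simp only [if_neg (by omega : ¬ L + k < L)]
    congr 1
    omega
  · intro v hv hvA
    obtain ⟨i, hi⟩ := hv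
    simp only at hi
    by_cases h : i < L
    · rw [if_pos h] at hi
      exact hpA v (hi ▸ Walk.mem_support_iff_exists_getVert.2 ⟨i, rfl, by omega⟩) hvA
    · rw [if_neg h] at hi
      exact absurd hvA (hTA v ⟨i - L, hi⟩)

def PSpec (G : SimpleGraph V) (F : ℕ → ℕ → V) (A : Set V) (n : ℕ) (d : (ℕ → V) × V) : Prop :=
  Function.Injective d.1 ∧ (∀ i, G.Adj (d.1 i) (d.1 (i + 1))) ∧ d.1 0 = d.2 ∧
  (∃ L s, ∀ k, d.1 (L + k) = F n (k + s)) ∧ (1 ≤ n → d.2 ∈ A) ∧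
  (∀ v ∈ Set.range d.1, v ∈ A → v = d.2)

noncomputable def piece (G : SimpleGraph V) (F : ℕ → ℕ → V) [Nonempty V] : ℕ → (ℕ → V) × V
  | n => Classical.epsilon (PSpec G F {v | ∃ m, ∃ _h : m < n, ∃ i, (piece G F m).1 i = v} n)
termination_by n => n
decreasing_by exact _h

def pset (G : SimpleGraph V) (F : ℕ → ℕ → V) [Nonempty V] (n : ℕ) : Set V :=
  {v | ∃ m, ∃ _h : m < n, ∃ i, (piece G F m).1 i = v}

lemma piece_eq (G : SimpleGraph V) (F : ℕ → ℕ → V) [Nonempty V] (n : ℕ) :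
    piece G F n = Classical.epsilon (PSpec G F (pset G F n) n) := by
  rw [piece]
  rfl

lemma inter_finite {F : ℕ → ℕ → V} (hF : ∀ i, IsRay G (F i))
    (hP : Pairwise fun i j => ¬ RayEquiv G (F i) (F j)) {i j : ℕ} (hij : i ≠ j) :
    (Set.range (F i) ∩ Set.range (F j)).Finite := by
  by_contra hcon
  exact hP hij (rayEquiv_of_infinite_inter (hF i) (hF j) hcon)

lemma exists_pspec (hc : G.Connected) {F : ℕ → ℕ → V} (hF : ∀ i, IsRay G (F i))
    (hfin : ∀ i j : ℕ, i ≠ j → (Set.range (F i) ∩ Set.range (F j)).Finite)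
    [Nonempty V] (n : ℕ)
    (IH : ∀ m, m < n → PSpec G F (pset G F m) m (piece G F m)) :
    ∃ d, PSpec G F (pset G F n) n d := by
  match n with
  | 0 =>
    refine ⟨(F 0, F 0 0), (hF 0).1, (hF 0).2, rfl, ⟨0, 0, fun k => by simp⟩,
      fun h => absurd h (by omega), fun v _ hv => ?_⟩
    obtain ⟨m, hm, _⟩ := hv
    omega
  | (n' + 1) =>
    set n := n' + 1 with hn
    set A := pset G F n with hA
    have hA0 : (piece G F 0).1 0 ∈ A := ⟨0, by omega, 0, rfl⟩
    have h4 : ∀ m, ∃ L s, ∀ k, m < n → (piece G F m).1 (L + k) = F m (k + s) := by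
      intro m
      by_cases hm : m < n
      · obtain ⟨L, s, hLs⟩ := (IH m hm).2.2.2.1
        exact ⟨L, s, fun k _ => hLs k⟩
      · exact ⟨0, 0, fun k hm' => absurd hm' hm⟩
    choose L s hLs using h4
    -- the set of indices where F n hits A is finite
    have hbad : {i | F n i ∈ A}.Finite := by
      have hsub : {i | F n i ∈ A} ⊆
          ⋃ m ∈ Set.Iio n, {i | F n i ∈ ((piece G F m).1 '' Set.Iio (L m)) ∪
            (Set.range (F n) ∩ Set.range (F m))} := by
        intro i hi
        obtain ⟨m, hm, j, hj⟩ := hi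
        refine Set.mem_biUnion (Set.mem_Iio.mpr hm) ?_
        by_cases hj2 : j < L m
        · exact Or.inl ⟨j, Set.mem_Iio.mpr hj2, hj⟩
        · obtain ⟨w, hw⟩ : ∃ w, j = L m + w := ⟨j - L m, by omega⟩
          subst hw
          refine Or.inr ⟨⟨i, rfl⟩, ⟨w + s m, ?_⟩⟩
          rw [← hj]
          exact (hLs m w hm).symm
      refine Set.Finite.subset ?_ hsub
      refine (Set.finite_Iio n).biUnion ?_
      intro m hm
      refine finite_pre (hF n).1 ?_
      refine Set.Finite.union (((Set.finite_Iio (L m)).image _)) ?_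
      exact hfin n m (by have := Set.mem_Iio.mp hm; omega)
    obtain ⟨s0, hs0⟩ := exists_bound_of_finite hbad
    set T : ℕ → V := fun k => F n (k + s0) with hT
    have hTray : IsRay G T := isRay_tail (hF n) s0
    have hTA : ∀ v ∈ Set.range T, v ∉ A := by
      rintro v ⟨k, rfl⟩
      exact hs0 (k + s0) (by omega)
    have hdisj : ∀ v, v ∈ A → v ∈ Set.range T → False := fun v hv hv2 => hTA v hv2 hv
    obtain ⟨e, u, p, he, hu, hpath, hlen, hpA, hpB⟩ :=
      exists_connector hc hdisj hA0 (⟨0, rfl⟩ : T 0 ∈ Set.range T)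
    obtain ⟨s1, hs1⟩ := hu
    set T' : ℕ → V := fun k => T (k + s1) with hT'
    have hT'ray : IsRay G T' := isRay_tail hTray s1
    have hT'0 : T' 0 = u := by
      show T (0 + s1) = u
      rw [Nat.zero_add]
      exact hs1
    have hT'A : ∀ v ∈ Set.range T', v ∉ A := by
      rintro v ⟨k, rfl⟩
      exact hTA _ ⟨k + s1, rfl⟩
    have hsep : ∀ z ∈ p.support, z ∈ Set.range T' → z = u := by
      rintro z hz ⟨k, rfl⟩
      exact hpB _ hz ⟨k + s1, rfl⟩
    obtain ⟨β, hβray, hβ0, hβtail, hβA⟩ :=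
      splice_ray p hpath hlen T' hT'ray hT'0 hsep A hpA hT'A
    refine ⟨(β, e), hβray.1, hβray.2, hβ0, ⟨p.length, s1 + s0, fun k => ?_⟩,
      fun _ => he, hβA⟩
    have := hβtail k
    simp only at this ⊢
    rw [this]
    show F n (k + s1 + s0) = F n (k + (s1 + s0))
    congr 1
    omega

lemma pieceSpec (hc : G.Connected) {F : ℕ → ℕ → V} (hF : ∀ i, IsRay G (F i))
    (hfin : ∀ i j : ℕ, i ≠ j → (Set.range (F i) ∩ Set.range (F j)).Finite)
    [Nonempty V] : ∀ n, PSpec G F (pset G F n) n (piece G F n) := by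
  intro n
  induction n using Nat.strong_induction_on with
  | _ n IH =>
    rw [piece_eq]
    exact Classical.epsilon_spec (exists_pspec hc hF hfin n IH)


lemma exists_mono_enum {C : Set ℕ} (hC : C.Infinite) (t : ℕ → ℕ) :
    ∃ c : ℕ → ℕ, (∀ k, c k ∈ C) ∧ (∀ k l, k < l → c k ≠ c l) ∧
      (∀ k l, k ≤ l → t (c k) ≤ t (c l)) := by
  by_cases h : ∃ v, {n | n ∈ C ∧ t n = v}.Infinite
  · obtain ⟨v, hv⟩ := h
    let e := hv.natEmbedding
    refine ⟨fun k => (e k : ℕ), fun k => (e k).2.1, ?_, ?_⟩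
    · intro k l hkl heq
      exact absurd (e.injective (Subtype.coe_injective heq)) (by omega)
    · intro k l _
      show t ((e k : ℕ)) ≤ t ((e l : ℕ))
      have h1 : t ((e k : ℕ)) = v := (e k).2.2
      have h2 : t ((e l : ℕ)) = v := (e l).2.2
      omega
  · push_neg at h
    have h' : ∀ v, {n | n ∈ C ∧ t n = v}.Finite := fun v => h v
    have hstep : ∀ x : ℕ, ∃ y, y ∈ C ∧ t x < t y := by
      intro x
      have hfin2 : {n | n ∈ C ∧ t n ≤ t x}.Finite := by
        refine Set.Finite.subset ((Set.finite_Iic (t x)).biUnion (fun v _ => h' v)) ?_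
        intro n hn
        exact Set.mem_biUnion (Set.mem_Iic.mpr hn.2) ⟨hn.1, rfl⟩
      obtain ⟨y, hy⟩ := (hC.diff hfin2).nonempty
      refine ⟨y, hy.1, ?_⟩
      by_contra hcon
      exact hy.2 ⟨hy.1, by omega⟩
    set c : ℕ → ℕ := fun k => Nat.rec (hC.nonempty.choose) (fun _ prev => (hstep prev).choose) k with hc
    have hc0 : c 0 ∈ C := hC.nonempty.choose_spec
    have hcs : ∀ k, c (k + 1) = (hstep (c k)).choose := fun k => rfl
    have hcC : ∀ k, c k ∈ C := by
      intro k
      cases k with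
      | zero => exact hc0
      | succ k => rw [hcs k]; exact (hstep (c k)).choose_spec.1
    have hmono : StrictMono (fun k => t (c k)) := by
      apply strictMono_nat_of_lt_succ
      intro k
      show t (c k) < t (c (k + 1))
      rw [hcs k]
      exact (hstep (c k)).choose_spec.2
    refine ⟨c, hcC, ?_, fun k l hkl => (hmono.monotone hkl : _)⟩
    intro k l hkl heq
    have h2 : t (c k) < t (c l) := hmono hkl
    rw [heq] at h2
    omega

lemma exists_chain (π : ℕ → ℕ) (hπ0 : π 0 = 0) (hπ : ∀ n, 1 ≤ n → π n < n)
    (hfib : ∀ m, {n | 1 ≤ n ∧ π n = m}.Finite) :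
    ∃ g : ℕ → ℕ, StrictMono g ∧ ∀ j, π (g (j + 1)) = g j ∧ 1 ≤ g (j + 1) := by
  classical
  set desc : ℕ → Set ℕ := fun m => {n | ∃ k, π^[k] n = m} with hdesc
  have hd0 : ∀ n, n ∈ desc 0 := by
    intro n
    induction n using Nat.strong_induction_on with
    | _ n IH =>
      rcases Nat.eq_zero_or_pos n with h | h
      · exact ⟨0, by simp [h]⟩
      · obtain ⟨k, hk⟩ := IH (π n) (hπ n h)
        exact ⟨k + 1, by rw [Function.iterate_succ_apply]; exact hk⟩
  have hinf0 : (desc 0).Infinite := by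
    have : desc 0 = Set.univ := Set.eq_univ_of_forall hd0
    rw [this]
    exact Set.infinite_univ
  have claim1 : ∀ m, (desc m).Infinite → ∃ c, π c = m ∧ m < c ∧ (desc c).Infinite := by
    intro m hm
    set children := {c | 1 ≤ c ∧ π c = m ∧ c ≠ m} with hch
    have hchfin : children.Finite := (hfib m).subset (fun c hc => ⟨hc.1, hc.2.1⟩)
    have hsub : desc m ⊆ {m} ∪ ⋃ c ∈ children, desc c := by
      intro n hn
      by_cases hnm : n = m
      · exact Or.inl (by simp [hnm])
      · right
        have hex : ∃ k, π^[k] n = m := hn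
        set k0 := Nat.find hex with hk0
        have hk0spec : π^[k0] n = m := Nat.find_spec hex
        have hk0pos : 1 ≤ k0 := by
          rcases Nat.eq_zero_or_pos k0 with h | h
          · exfalso; apply hnm; rw [h] at hk0spec; simpa using hk0spec
          · exact h
        obtain ⟨k1, hk1⟩ : ∃ k1, k0 = k1 + 1 := ⟨k0 - 1, by omega⟩
        set c := π^[k1] n with hcdef
        have hcm : c ≠ m := Nat.find_min hex (by omega)
        have hπc : π c = m := by
          have h1 : π (π^[k1] n) = π^[k1 + 1] n := (Function.iterate_succ_apply' π k1 n).symm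
          rw [← hcdef] at h1
          rw [h1, ← hk1, hk0spec]
        have hc1 : 1 ≤ c := by
          by_contra hcon
          have hc0 : c = 0 := by omega
          apply hcm
          rw [hc0] at hπc ⊢
          rw [hπ0] at hπc
          omega
        exact Set.mem_biUnion (⟨hc1, hπc, hcm⟩ : c ∈ children) ⟨k1, rfl⟩
    by_contra hcon
    push_neg at hcon
    have hallfin : ∀ c ∈ children, (desc c).Finite := by
      intro c hc
      have hlt : m < c := by
        have := hπ c hc.1
        have := hc.2.1
        omega
      exact hcon c hc.2.1 hlt
    exact hm (Set.Finite.subset ((Set.finite_singleton m).union (hchfin.biUnion hallfin)) hsub)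
  -- build the chain
  set next : {m : ℕ // (desc m).Infinite} → {m : ℕ // (desc m).Infinite} :=
    fun p => ⟨(claim1 p.1 p.2).choose, (claim1 p.1 p.2).choose_spec.2.2⟩ with hnext
  set gA : ℕ → {m : ℕ // (desc m).Infinite} :=
    fun j => Nat.rec ⟨0, hinf0⟩ (fun _ prev => next prev) j with hgA
  have hgAs : ∀ j, gA (j + 1) = next (gA j) := fun j => rfl
  refine ⟨fun j => (gA j).1, ?_, ?_⟩
  · apply strictMono_nat_of_lt_succ
    intro j
    show (gA j).1 < (gA (j + 1)).1
    rw [hgAs j]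
    exact (claim1 (gA j).1 (gA j).2).choose_spec.2.1
  · intro j
    show π (gA (j + 1)).1 = (gA j).1 ∧ 1 ≤ (gA (j + 1)).1
    rw [hgAs j]
    have hspec := (claim1 (gA j).1 (gA j).2).choose_spec
    refine ⟨hspec.1, ?_⟩
    show 1 ≤ (claim1 (gA j).1 (gA j).2).choose
    have := hspec.2.1
    omega

lemma build_double_ray (Lr Rr : ℕ → V) (hL : IsRay G Lr) (hR : IsRay G Rr)
    (h0 : Lr 0 = Rr 0) (hint : ∀ v, v ∈ Set.range Lr → v ∈ Set.range Rr → v = Lr 0) :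
    ∃ D : ℤ → V, IsDoubleRay G D ∧ drEdges D ⊆ rayEdges Lr ∪ rayEdges Rr := by
  classical
  refine ⟨fun z => if z ≤ 0 then Lr (-z).toNat else Rr z.toNat, ⟨?_, ?_⟩, ?_⟩
  · intro z w hzw
    simp only at hzw
    split_ifs at hzw with hz hw hw
    · have := hL.1 hzw
      omega
    · exfalso
      have hv := hint (Lr (-z).toNat) ⟨_, rfl⟩ ⟨w.toNat, hzw.symm⟩
      rw [hv, h0] at hzw
      have := hR.1 hzw.symm
      omega
    · exfalso
      have hv := hint (Lr (-w).toNat) ⟨_, rfl⟩ ⟨z.toNat, hzw⟩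
      rw [hv, h0] at hzw
      have := hR.1 hzw
      omega
    · have := hR.1 hzw
      omega
  · intro z
    simp only
    by_cases hz : z + 1 ≤ 0
    · rw [if_pos hz, if_pos (by omega : z ≤ 0)]
      have e1 : (-z).toNat = (-(z + 1)).toNat + 1 := by omega
      rw [e1]
      exact (hL.2 _).symm
    · by_cases hz0 : z ≤ 0
      · have hzz : z = 0 := by omega
        subst hzz
        rw [if_pos le_rfl, if_neg (by omega)]
        have e1 : ((0 : ℤ) + 1).toNat = 1 := by omega
        have e2 : (-(0 : ℤ)).toNat = 0 := by omega
        rw [e1, e2, h0]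
        exact hR.2 0
      · rw [if_neg hz, if_neg hz0]
        have e1 : (z + 1).toNat = z.toNat + 1 := by omega
        rw [e1]
        exact hR.2 _
  · rintro x ⟨z, hx⟩
    simp only at hx
    by_cases hz : z + 1 ≤ 0
    · rw [if_pos hz, if_pos (by omega : z ≤ 0)] at hx
      left
      refine ⟨(-(z + 1)).toNat, ?_⟩
      have e1 : (-z).toNat = (-(z + 1)).toNat + 1 := by omega
      rw [hx, e1]
      exact Sym2.eq_swap.symm
    · by_cases hz0 : z ≤ 0
      · have hzz : z = 0 := by omega
        subst hzz
        rw [if_pos le_rfl, if_neg (by omega)] at hx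
        right
        refine ⟨0, ?_⟩
        have e1 : ((0 : ℤ) + 1).toNat = 1 := by omega
        have e2 : (-(0 : ℤ)).toNat = 0 := by omega
        rw [hx, e1, e2, h0]
      · rw [if_neg hz, if_neg hz0] at hx
        right
        refine ⟨z.toNat, ?_⟩
        have e1 : (z + 1).toNat = z.toNat + 1 := by omega
        rw [hx, e1]

lemma glue_seg_ray (f : ℕ → V) (hf : IsRay G f) (t1 d : ℕ) (Rr : ℕ → V) (hRr : IsRay G Rr)
    (h0 : Rr 0 = f (t1 + d))
    (hint : ∀ v, v ∈ Set.range Rr → (∃ k, k ≤ d ∧ f (t1 + k) = v) → v = Rr 0) :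
    ∃ R : ℕ → V, IsRay G R ∧ R 0 = f t1 ∧
      (∀ v ∈ Set.range R, (∃ k, k ≤ d ∧ f (t1 + k) = v) ∨ v ∈ Set.range Rr) ∧
      (∀ x ∈ rayEdges R, (∃ i, t1 ≤ i ∧ i + 1 ≤ t1 + d ∧ x = s(f i, f (i + 1))) ∨
        x ∈ rayEdges Rr) := by
  classical
  refine ⟨fun k => if k < d then f (t1 + k) else Rr (k - d), ⟨?_, ?_⟩, ?_, ?_, ?_⟩
  · intro k l hkl
    simp only at hkl
    split_ifs at hkl with hk hl hl
    · have := hf.1 hkl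
      omega
    · exfalso
      have hv := hint (f (t1 + k)) ⟨l - d, hkl.symm⟩ ⟨k, by omega, rfl⟩
      rw [h0] at hv
      have := hf.1 hv
      omega
    · exfalso
      have hv := hint (f (t1 + l)) ⟨k - d, hkl⟩ ⟨l, by omega, rfl⟩
      rw [h0] at hv
      have := hf.1 hv
      omega
    · have := hRr.1 hkl
      omega
  · intro k
    simp only
    by_cases h1 : k + 1 < d
    · rw [if_pos (by omega : k < d), if_pos h1]
      have e1 : t1 + (k + 1) = (t1 + k) + 1 := by omega
      rw [e1]
      exact hf.2 _
    · by_cases h2 : k < d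
      · rw [if_pos h2, if_neg (by omega)]
        have e1 : k + 1 - d = 0 := by omega
        have e2 : t1 + d = (t1 + k) + 1 := by omega
        rw [e1, h0, e2]
        exact hf.2 _
      · rw [if_neg h2, if_neg (by omega)]
        have e1 : k + 1 - d = (k - d) + 1 := by omega
        rw [e1]
        exact hRr.2 _
  · simp only
    by_cases h : 0 < d
    · rw [if_pos h]
      norm_num
    · rw [if_neg h]
      have e1 : 0 - d = 0 := by omega
      have e2 : d = 0 := by omega
      rw [e1, h0, e2]
      norm_num
  · rintro v ⟨k, hk⟩
    simp only at hk
    by_cases h : k < d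
    · rw [if_pos h] at hk
      exact Or.inl ⟨k, by omega, hk⟩
    · rw [if_neg h] at hk
      exact Or.inr ⟨k - d, hk⟩
  · rintro x ⟨k, hx⟩
    simp only at hx
    by_cases h1 : k + 1 < d
    · rw [if_pos (by omega : k < d), if_pos h1] at hx
      left
      refine ⟨t1 + k, by omega, by omega, ?_⟩
      rw [hx]
      have e1 : t1 + k + 1 = t1 + (k + 1) := by omega
      rw [e1]
    · by_cases h2 : k < d
      · rw [if_pos h2, if_neg (by omega)] at hx
        left
        refine ⟨t1 + k, by omega, by omega, ?_⟩
        have e1 : k + 1 - d = 0 := by omega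
        have e2 : t1 + d = t1 + k + 1 := by omega
        rw [hx, e1, h0, e2]
      · rw [if_neg h2, if_neg (by omega)] at hx
        right
        refine ⟨k - d, ?_⟩
        have e1 : k + 1 - d = (k - d) + 1 := by omega
        rw [hx, e1]

lemma main_aux (G : SimpleGraph V) (hc : G.Connected) (F : ℕ → ℕ → V)
    (hF : ∀ i, IsRay G (F i)) (hP : Pairwise fun i j => ¬ RayEquiv G (F i) (F j)) :
    ∃ Fd : ℕ → ℤ → V, (∀ i, IsDoubleRay G (Fd i)) ∧
      Pairwise fun i j => Disjoint (drEdges (Fd i)) (drEdges (Fd j)) := by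
  classical
  haveI : Nonempty V := ⟨F 0 0⟩
  have hfin : ∀ i j : ℕ, i ≠ j → (Set.range (F i) ∩ Set.range (F j)).Finite :=
    fun i j hij => inter_finite hF hP hij
  have S := pieceSpec hc hF hfin
  set B : ℕ → ℕ → V := fun n => (piece G F n).1 with hB
  set E : ℕ → V := fun n => (piece G F n).2 with hE
  have hBray : ∀ n, IsRay G (B n) := fun n => ⟨(S n).1, (S n).2.1⟩
  have hB0 : ∀ n, B n 0 = E n := fun n => (S n).2.2.1
  have hF2 : ∀ m n, m < n → ∀ v, v ∈ Set.range (B n) → v ∈ Set.range (B m) → v = E n := by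
    intro m n hmn v hv hvm
    obtain ⟨i, hi⟩ := hvm
    exact (S n).2.2.2.2.2 v hv ⟨m, hmn, i, hi⟩
  have hEdis : ∀ a b : ℕ, a ≠ b → ∀ x, x ∈ rayEdges (B a) → x ∈ rayEdges (B b) → False := by
    have haux : ∀ a b : ℕ, a < b → ∀ x, x ∈ rayEdges (B b) → x ∈ rayEdges (B a) → False := by
      intro a b hab x hxb hxa
      obtain ⟨i, hi⟩ := hxa
      obtain ⟨j, hj⟩ := hxb
      have hcomb : s(B a i, B a (i + 1)) = s(B b j, B b (j + 1)) := by rw [← hi, ← hj]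
      rw [Sym2.eq_iff] at hcomb
      have hmem : B a i ∈ Set.range (B b) ∧ B a (i + 1) ∈ Set.range (B b) := by
        rcases hcomb with ⟨h1, h2⟩ | ⟨h1, h2⟩
        · exact ⟨⟨j, h1.symm⟩, ⟨j + 1, h2.symm⟩⟩
        · exact ⟨⟨j + 1, h1.symm⟩, ⟨j, h2.symm⟩⟩
      have ha1 : B a i = E b := hF2 a b hab _ hmem.1 ⟨i, rfl⟩
      have ha2 : B a (i + 1) = E b := hF2 a b hab _ hmem.2 ⟨i + 1, rfl⟩
      have := (hBray a).1 (ha1.trans ha2.symm)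
      omega
    intro a b hab x hxa hxb
    rcases hab.lt_or_gt with h | h
    · exact haux a b h x hxb hxa
    · exact haux b a h x hxa hxb
  have h5 : ∀ n, ∃ m i, 1 ≤ n → (m < n ∧ B m i = E n) := by
    intro n
    by_cases hn : 1 ≤ n
    · obtain ⟨m, hm, i, hi⟩ := (S n).2.2.2.2.1 hn
      exact ⟨m, i, fun _ => ⟨hm, hi⟩⟩
    · exact ⟨0, 0, fun hcon => absurd hcon hn⟩
  choose π0 t hπt using h5
  set π : ℕ → ℕ := fun n => if 1 ≤ n then π0 n else 0 with hπdef
  have hπlt : ∀ n, 1 ≤ n → π n < n := by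
    intro n hn
    simp only [hπdef, if_pos hn]
    exact (hπt n hn).1
  have hπB : ∀ n, 1 ≤ n → B (π n) (t n) = E n := by
    intro n hn
    simp only [hπdef, if_pos hn]
    exact (hπt n hn).2
  have hπ0 : π 0 = 0 := by simp [hπdef]
  -- helper for final pairwise
  have hsym : ∀ (Fd : ℕ → ℤ → V) (U : ℕ → Set (Sym2 V)),
      (∀ i j, i < j → ∀ x, x ∈ U i → x ∈ U j → False) →
      (∀ i, drEdges (Fd i) ⊆ U i) →
      Pairwise fun i j => Disjoint (drEdges (Fd i)) (drEdges (Fd j)) := by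
    intro Fd U hU hsub i j hij
    rw [Set.disjoint_left]
    intro x hxi hxj
    rcases hij.lt_or_gt with h | h
    · exact hU i j h x (hsub i hxi) (hsub j hxj)
    · exact hU j i h x (hsub j hxj) (hsub i hxi)
  by_cases hcase : ∃ m, {n | 1 ≤ n ∧ π n = m}.Infinite
  · -- CASE A : star case
    obtain ⟨m0, hm0inf⟩ := hcase
    obtain ⟨c, hcC, hcInj, hcMono⟩ := exists_mono_enum hm0inf t
    have hc1 : ∀ k, 1 ≤ c k := fun k => (hcC k).1
    have hcπ : ∀ k, π (c k) = m0 := fun k => (hcC k).2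
    have hm0lt : ∀ k, m0 < c k := fun k => (hcπ k) ▸ hπlt (c k) (hc1 k)
    have hcne : ∀ k l, k ≠ l → c k ≠ c l := by
      intro k l hkl
      rcases hkl.lt_or_gt with h | h
      · exact hcInj k l h
      · exact (hcInj l k h).symm
    have hcm0 : ∀ k, c k ≠ m0 := fun k => by have := hm0lt k; omega
    -- build each double ray
    have hDD : ∀ i : ℕ, ∃ D : ℤ → V, IsDoubleRay G D ∧ drEdges D ⊆
        rayEdges (B (c (2 * i))) ∪
        ({x | ∃ q, t (c (2 * i)) ≤ q ∧ q + 1 ≤ t (c (2 * i + 1)) ∧ x = s(B m0 q, B m0 (q + 1))} ∪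
          rayEdges (B (c (2 * i + 1)))) := by
      intro i
      set a := c (2 * i) with ha
      set b := c (2 * i + 1) with hb
      set t1 := t a with ht1
      set t2 := t b with ht2
      have ht12 : t1 ≤ t2 := hcMono (2 * i) (2 * i + 1) (by omega)
      set d := t2 - t1 with hd
      have hEb : E b = B m0 t2 := ((hcπ (2 * i + 1)) ▸ hπB b (hc1 (2 * i + 1))).symm
      have hEa : E a = B m0 t1 := ((hcπ (2 * i)) ▸ hπB a (hc1 (2 * i))).symm
      have hab : a ≠ b := hcne (2 * i) (2 * i + 1) (by omega)
      -- glue the segment with B b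
      obtain ⟨R, hRray, hR0, hRrange, hRedges⟩ :=
        glue_seg_ray (B m0) (hBray m0) t1 d (B b) (hBray b)
          (by rw [hB0 b, hEb]; congr 1; omega)
          (by
            intro v hv hseg
            obtain ⟨k, hk, hkv⟩ := hseg
            rw [hB0 b]
            refine hF2 m0 b (hm0lt (2 * i + 1)) v hv ⟨t1 + k, hkv⟩)
      -- build the double ray
      obtain ⟨D, hD, hDedge⟩ := build_double_ray (B a) R (hBray a) hRray
        (by rw [hR0, hB0 a, hEa])
        (by
          intro v hva hvR
          rw [hB0 a, hEa]
          rcases hRrange v hvR with ⟨k, hk, hkv⟩ | hvb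
          · exact (hF2 m0 a (hm0lt (2 * i)) v hva ⟨t1 + k, hkv⟩).trans hEa
          · rcases hab.lt_or_gt with h | h
            · have hvEb : v = E b := hF2 a b h v hvb hva
              have hvm0 : v ∈ Set.range (B m0) := ⟨t2, (hvEb.trans hEb).symm⟩
              exact (hF2 m0 a (hm0lt (2 * i)) v hva hvm0).trans hEa
            · exact ((hF2 b a h v hva hvb).trans hEa))
      refine ⟨D, hD, ?_⟩
      intro x hx
      rcases hDedge hx with hxa | hxR
      · exact Or.inl hxa
      · rcases hRedges x hxR with ⟨q, hq1, hq2, hq3⟩ | hxb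
        · exact Or.inr (Or.inl ⟨q, hq1, by omega, hq3⟩)
        · exact Or.inr (Or.inr hxb)
    choose Fd hFd1 hFd2 using hDD
    refine ⟨Fd, fun i => hFd1 i, ?_⟩
    apply hsym Fd _ ?_ hFd2
    intro i j hij x hxi hxj
    have hlt1 : 2 * i < 2 * j := by omega
    have hlt2 : 2 * i + 1 < 2 * j := by omega
    have hseg_m0 : ∀ q1 q2 : ℕ, ∀ y, y ∈ {x | ∃ q, q1 ≤ q ∧ q + 1 ≤ q2 ∧ x = s(B m0 q, B m0 (q + 1))} →
        y ∈ rayEdges (B m0) := by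
      rintro q1 q2 y ⟨q, _, _, hy⟩
      exact ⟨q, hy⟩
    rcases hxi with hxi | hxi | hxi <;> rcases hxj with hxj | hxj | hxj
    · exact hEdis _ _ (hcne _ _ (by omega)) x hxi hxj
    · exact hEdis _ _ (hcm0 (2 * i)) x hxi (hseg_m0 _ _ x hxj)
    · exact hEdis _ _ (hcne _ _ (by omega)) x hxi hxj
    · exact hEdis _ _ (hcm0 (2 * j)).symm x (hseg_m0 _ _ x hxi) hxj
    · -- two segments of B m0
      obtain ⟨q, hq1, hq2, hq3⟩ := hxi
      obtain ⟨r, hr1, hr2, hr3⟩ := hxj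
      have hcomb : s(B m0 q, B m0 (q + 1)) = s(B m0 r, B m0 (r + 1)) := by rw [← hq3, ← hr3]
      rw [Sym2.eq_iff] at hcomb
      have hsep : q + 1 ≤ r := by
        have := hcMono (2 * i + 1) (2 * j) (by omega)
        omega
      rcases hcomb with ⟨h1, h2⟩ | ⟨h1, h2⟩
      · have := (hBray m0).1 h1
        omega
      · have := (hBray m0).1 h1
        omega
    · exact hEdis _ _ (hcm0 (2 * j + 1)).symm x (hseg_m0 _ _ x hxi) hxj
    · exact hEdis _ _ (hcne _ _ (by omega)) x hxi hxj
    · exact hEdis _ _ (hcm0 (2 * i + 1)) x hxi (hseg_m0 _ _ x hxj)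
    · exact hEdis _ _ (hcne _ _ (by omega)) x hxi hxj
  · -- CASE B : chain case
    push_neg at hcase
    have hfib : ∀ m, {n | 1 ≤ n ∧ π n = m}.Finite := fun m => hcase m
    obtain ⟨g, hgmono, hgchain⟩ := exists_chain π hπ0 hπlt hfib
    have hgne : ∀ k l, k ≠ l → g k ≠ g l := fun k l hkl => fun h => hkl (hgmono.injective h)
    have hDD : ∀ i : ℕ, ∃ D : ℤ → V, IsDoubleRay G D ∧ drEdges D ⊆
        rayEdges (B (g (2 * i + 1))) ∪ rayEdges (B (g (2 * i))) := by
      intro i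
      set a := g (2 * i + 1) with ha
      set p := g (2 * i) with hp
      have hchain := hgchain (2 * i)
      have hπa : π a = p := hchain.1
      have ha1 : 1 ≤ a := hchain.2
      have hpa : p < a := hπa ▸ hπlt a ha1
      set Rr : ℕ → V := fun k => B p (k + t a) with hRr
      have hRray : IsRay G Rr := isRay_tail (hBray p) (t a)
      have hEa : E a = B p (t a) := (hπa ▸ hπB a ha1).symm
      obtain ⟨D, hD, hDedge⟩ := build_double_ray (B a) Rr (hBray a) hRray
        (by rw [hB0 a, hEa]; show B p (t a) = B p (0 + t a); congr 1; omega)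
        (by
          intro v hva hvR
          rw [hB0 a, hEa]
          have hvp : v ∈ Set.range (B p) := by
            obtain ⟨k, hk⟩ := hvR
            exact ⟨k + t a, hk⟩
          exact (hF2 p a hpa v hva hvp).trans hEa)
      refine ⟨D, hD, ?_⟩
      intro x hx
      rcases hDedge hx with hxa | hxR
      · exact Or.inl hxa
      · right
        obtain ⟨k, hk⟩ := hxR
        refine ⟨k + t a, ?_⟩
        rw [hk]
        show s(B p (k + t a), B p (k + 1 + t a)) = s(B p (k + t a), B p (k + t a + 1))
        rw [show k + 1 + t a = k + t a + 1 from by omega]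
    choose Fd hFd1 hFd2 using hDD
    refine ⟨Fd, fun i => hFd1 i, ?_⟩
    apply hsym Fd _ ?_ hFd2
    intro i j hij x hxi hxj
    rcases hxi with hxi | hxi <;> rcases hxj with hxj | hxj
    · exact hEdis _ _ (hgne _ _ (by omega)) x hxi hxj
    · exact hEdis _ _ (hgne _ _ (by omega)) x hxi hxj
    · exact hEdis _ _ (hgne _ _ (by omega)) x hxi hxj
    · exact hEdis _ _ (hgne _ _ (by omega)) x hxi hxj

/-- Any connected graph with infinitely many ends contains infinitely many
pairwise edge-disjoint double rays. -/
theorem stmt_5 (G : SimpleGraph V) (hc : G.Connected)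
    (h : ∃ F : ℕ → ℕ → V, (∀ i, IsRay G (F i)) ∧
      Pairwise fun i j => ¬ RayEquiv G (F i) (F j)) :
    ∃ F : ℕ → ℤ → V, (∀ i, IsDoubleRay G (F i)) ∧
      Pairwise fun i j => Disjoint (drEdges (F i)) (drEdges (F j)) := by
  obtain ⟨F, hF, hP⟩ := h
  exact main_aux G hc F hF hP
end

section
/- Let G be a graph whose end ω has finite vertex-degree k, and let R be an infinite set of rays all belonging to ω. Then there is an infinite subset R' of R such that any two rays in R' intersect in infinitely many vertices. -/
open SimpleGraph

variable {V : Type*}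

section Aux

lemma exists_tail_avoid {V : Type*} (f : ℕ → V) (hf : Function.Injective f)
    {S : Set V} (hS : S.Finite) : ∃ N, ∀ n, N ≤ n → f n ∉ S := by
  have h : (f ⁻¹' S).Finite := hS.preimage hf.injOn
  obtain ⟨N, hN⟩ := h.bddAbove
  exact ⟨N + 1, fun n hn hmem => by have := hN hmem; omega⟩

lemma walk_along {V : Type*} (G : SimpleGraph V) (f : ℕ → V)
    (hadj : ∀ n, G.Adj (f n) (f (n+1))) (b m : ℕ) :
    ∃ w : G.Walk (f b) (f (b + m)), ∀ v ∈ w.support, ∃ t, b ≤ t ∧ t ≤ b + m ∧ v = f t := by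
  induction m with
  | zero => exact ⟨SimpleGraph.Walk.nil, by simp; exact ⟨b, le_rfl, le_rfl, rfl⟩⟩
  | succ m ih =>
    obtain ⟨w, hw⟩ := ih
    refine ⟨w.concat (hadj (b + m)), ?_⟩
    intro v hv
    rw [SimpleGraph.Walk.support_concat, List.mem_append] at hv
    rcases hv with hv | hv
    · obtain ⟨t, h1, h2, h3⟩ := hw v hv; exact ⟨t, h1, by omega, h3⟩
    · simp at hv; exact ⟨b + m + 1, by omega, by omega, hv⟩

end Aux


lemma ramsey_clique {α : Type*} {r : α → α → Prop} (hsym : Symmetric r) :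
    ∀ (k : ℕ) (A : Set α), A.Infinite →
      (¬ ∃ g : Fin (k+1) → α, Function.Injective g ∧ (∀ i, g i ∈ A) ∧
        ∀ i j, i ≠ j → ¬ r (g i) (g j)) →
      ∃ B, B ⊆ A ∧ B.Infinite ∧ ∀ x ∈ B, ∀ y ∈ B, x ≠ y → r x y := by
  intro k
  induction k with
  | zero =>
    intro A hA hno
    obtain ⟨a, ha⟩ := hA.nonempty
    have hone : ∀ i j : Fin (0+1), i = j := fun i j => by
      have := i.2; have := j.2; exact Fin.ext (by omega)
    exact absurd ⟨fun _ => a, fun i j _ => hone i j, fun _ => ha,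
      fun i j hij => absurd (hone i j) hij⟩ hno
  | succ k ih =>
    intro A hA hno
    classical
    by_cases hc : ∃ a ∈ A, {x | x ∈ A ∧ x ≠ a ∧ ¬ r a x}.Infinite
    · obtain ⟨a, haA, hCinf⟩ := hc
      have hnoC : ¬ ∃ g : Fin (k+1) → α, Function.Injective g ∧
          (∀ i, g i ∈ {x | x ∈ A ∧ x ≠ a ∧ ¬ r a x}) ∧
          ∀ i j, i ≠ j → ¬ r (g i) (g j) := by
        rintro ⟨g, ginj, gmem, gind⟩
        refine hno ⟨Fin.cons a g, ?_, ?_, ?_⟩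
        · refine Fin.cons_injective_of_injective ?_ ginj
          rintro ⟨i, rfl⟩
          exact (gmem i).2.1 rfl
        · intro i
          refine Fin.cases ?_ ?_ i
          · exact haA
          · intro j; exact (gmem j).1
        · intro i
          induction i using Fin.cases with
          | zero => intro j
                    induction j using Fin.cases with
                    | zero => intro hij; exact absurd rfl hij
                    | succ j' => intro _
                                 simp only [Fin.cons_zero, Fin.cons_succ]
                                 exact (gmem j').2.2
          | succ i' => intro j
                       induction j using Fin.cases with
                       | zero => intro _
                                 simp only [Fin.cons_zero, Fin.cons_succ]
                                 intro h; exact (gmem i').2.2 (hsym h)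
                       | succ j' => intro hij
                                    simp only [Fin.cons_succ]
                                    exact gind i' j' (fun h => hij (by rw [h]))
      obtain ⟨B, hB1, hB2, hB3⟩ := ih {x | x ∈ A ∧ x ≠ a ∧ ¬ r a x} hCinf hnoC
      exact ⟨B, fun x hx => (hB1 hx).1, hB2, hB3⟩
    · push_neg at hc
      have hCfin : ∀ a ∈ A, {x | x ∈ A ∧ x ≠ a ∧ ¬ r a x}.Finite := fun a ha =>
        hc a ha
      -- greedy construction
      let F : ℕ → {S : Set α // S.Infinite ∧ S ⊆ A} := fun n =>
        Nat.rec ⟨A, hA, subset_rfl⟩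
          (fun _ p =>
            ⟨p.1 \ insert p.2.1.nonempty.some
              {x | x ∈ A ∧ x ≠ p.2.1.nonempty.some ∧ ¬ r p.2.1.nonempty.some x},
             p.2.1.diff ((hCfin _ (p.2.2 p.2.1.nonempty.some_mem)).insert _),
             Set.diff_subset.trans p.2.2⟩) n
      let f : ℕ → α := fun n => (F n).2.1.nonempty.some
      have hfmem : ∀ n, f n ∈ (F n).1 := fun n => (F n).2.1.nonempty.some_mem
      have hsucc : ∀ n, (F (n+1)).1 =
          (F n).1 \ insert (f n) {x | x ∈ A ∧ x ≠ f n ∧ ¬ r (f n) x} := fun n => rfl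
      have hmono : ∀ m n, m ≤ n → (F n).1 ⊆ (F m).1 := by
        intro m n hmn
        induction n with
        | zero => have : m = 0 := by omega
                  subst this; exact subset_rfl
        | succ n ihn =>
          rcases Nat.lt_or_ge m (n+1) with h | h
          · exact ((hsucc n ▸ Set.diff_subset)).trans (ihn (by omega))
          · have : m = n + 1 := by omega
            subst this; exact subset_rfl
      have key : ∀ m n, m < n → f n ≠ f m ∧ r (f m) (f n) := by
        intro m n hmn
        have h1 : f n ∈ (F (m+1)).1 := hmono (m+1) n hmn (hfmem n)
        rw [hsucc m] at h1
        obtain ⟨h2, h3⟩ := h1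
        simp only [Set.mem_insert_iff, Set.mem_setOf_eq, not_or] at h3
        obtain ⟨h4, h5⟩ := h3
        refine ⟨h4, ?_⟩
        by_contra hr
        exact h5 ⟨(F n).2.2 (hfmem n), h4, hr⟩
      have finj : Function.Injective f := by
        intro m n h
        by_contra hne
        rcases Nat.lt_or_ge m n with hl | hl
        · exact (key m n hl).1 h.symm
        · exact (key n m (by omega)).1 h
      refine ⟨Set.range f, ?_, Set.infinite_range_of_injective finj, ?_⟩
      · rintro _ ⟨n, rfl⟩; exact (F n).2.2 (hfmem n)
      · rintro _ ⟨m, rfl⟩ _ ⟨n, rfl⟩ hne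
        rcases Nat.lt_or_ge m n with hl | hl
        · exact (key m n hl).2
        · have : n < m := by rcases Nat.lt_or_ge n m with h | h; exact h; exact absurd (by omega : m = n) (fun h' => hne (by rw [h']))
          exact hsym (key n m this).2


lemma isRay_tail_s7 {V : Type*} {G : SimpleGraph V} {f : ℕ → V} (hf : IsRay G f) (N : ℕ) :
    IsRay G (fun n => f (n + N)) := by
  refine ⟨fun a b h => by have := hf.1 h; omega, fun n => ?_⟩
  have := hf.2 (n + N)
  simpa [show n + 1 + N = n + N + 1 from by omega] using this

lemma rayEquiv_tail {V : Type*} {G : SimpleGraph V} {W f : ℕ → V}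
    (hadj : ∀ n, G.Adj (f n) (f (n+1))) (h : RayEquiv G W f) (N : ℕ) :
    RayEquiv G W (fun n => f (n + N)) := by
  intro S
  obtain ⟨a, b, hWa, hfb, w, hw⟩ := h S
  obtain ⟨w2, hw2⟩ := walk_along G f hadj b N
  refine ⟨a, b, hWa, fun j hj => hfb (j + N) (by omega), w.append w2, ?_⟩
  intro v hv
  rw [SimpleGraph.Walk.mem_support_append_iff] at hv
  rcases hv with hv | hv
  · exact hw v hv
  · obtain ⟨t, h1, h2, rfl⟩ := hw2 v hv
    exact hfb t h1


/-- If the end `ω` (represented by `W`) has finite vertex-degree `k` and `R` is an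
infinite set of rays of `ω`, then some infinite subset of `R` has pairwise infinite
intersection. -/

theorem stmt_7 (G : SimpleGraph V) (W : ℕ → V) (k : ℕ) (hW : IsRay G W)
    (hdeg : EndVertexDegree G W k)
    (R : Set (ℕ → V)) (hRinf : R.Infinite)
    (hmem : ∀ f ∈ R, IsRay G f ∧ RayEquiv G W f) :
    ∃ R' ⊆ R, R'.Infinite ∧
      ∀ f ∈ R', ∀ g ∈ R', f ≠ g → (Set.range f ∩ Set.range g).Infinite := by
  classical
  set r : (ℕ → V) → (ℕ → V) → Prop :=
    fun f g => (Set.range f ∩ Set.range g).Infinite with hr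
  have hsym : Symmetric r := by
    intro f g h
    show (Set.range g ∩ Set.range f).Infinite
    rwa [Set.inter_comm]
  have hno : ¬ ∃ g : Fin (k+1) → (ℕ → V), Function.Injective g ∧ (∀ i, g i ∈ R) ∧
      ∀ i j, i ≠ j → ¬ r (g i) (g j) := by
    rintro ⟨g, ginj, gmem, gind⟩
    set S : Fin (k+1) → Set V :=
      fun i => ⋃ j ∈ Finset.univ.erase i, (Set.range (g i) ∩ Set.range (g j)) with hS
    have hSfin : ∀ i, (S i).Finite := by
      intro i
      refine Set.Finite.biUnion (Finset.univ.erase i).finite_toSet ?_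
      intro j hj
      simp only [Finset.coe_erase, Set.mem_diff, Set.mem_singleton_iff] at hj
      exact Set.not_infinite.mp (gind i j (fun h => hj.2 h.symm))
    have hN : ∀ i : Fin (k+1), ∃ N, ∀ n, N ≤ n → g i n ∉ S i :=
      fun i => exists_tail_avoid (g i) ((hmem (g i) (gmem i)).1.1) (hSfin i)
    choose N hNs using hN
    set F : Fin (k+1) → ℕ → V := fun i n => g i (n + N i) with hF
    refine hdeg.2 ⟨F, fun i => ⟨isRay_tail_s7 (hmem (g i) (gmem i)).1 (N i),
      rayEquiv_tail (hmem (g i) (gmem i)).1.2 (hmem (g i) (gmem i)).2 (N i)⟩, ?_⟩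
    intro i j hij
    rw [Set.disjoint_left]
    rintro v ⟨n, rfl⟩ ⟨m, hm⟩
    refine hNs i (n + N i) (by omega) ?_
    rw [hS]
    have hjmem : j ∈ Finset.univ.erase i := by simp [Ne.symm hij]
    exact Set.mem_biUnion hjmem ⟨⟨n + N i, rfl⟩, ⟨m + N j, hm⟩⟩
  obtain ⟨B, hB1, hB2, hB3⟩ := ramsey_clique hsym k R hRinf hno
  exact ⟨B, hB1, hB2, hB3⟩
end

section
/- In a graph with an end of finite vertex-degree k, there is no family of k+1 rays of that end that pairwise intersect in only finitely many vertices. -/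
open SimpleGraph

variable {V : Type*}

/-- Walk along a ray from `f b` to `f (b + t)`. -/
def rayWalk (G : SimpleGraph V) (f : ℕ → V) (h : ∀ n, G.Adj (f n) (f (n + 1)))
    (b : ℕ) : (t : ℕ) → G.Walk (f b) (f (b + t))
  | 0 => SimpleGraph.Walk.nil
  | t + 1 => (rayWalk G f h b t).concat (by rw [← Nat.add_assoc]; exact h (b + t))

lemma rayWalk_support (G : SimpleGraph V) (f : ℕ → V) (h : ∀ n, G.Adj (f n) (f (n + 1)))
    (b t : ℕ) : ∀ v ∈ (rayWalk G f h b t).support, ∃ j, b ≤ j ∧ v = f j := by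
  induction t with
  | zero => intro v hv; simp [rayWalk] at hv; exact ⟨b, le_rfl, hv⟩
  | succ t ih =>
    intro v hv
    rw [rayWalk, SimpleGraph.Walk.support_concat,
      List.mem_append] at hv
    rcases hv with hv | hv
    · exact ih v hv
    · simp only [List.mem_singleton] at hv
      exact ⟨b + (t + 1), Nat.le_add_right _ _, hv⟩

lemma tail_isRay {G : SimpleGraph V} {f : ℕ → V} (hf : IsRay G f) (N : ℕ) :
    IsRay G (fun n => f (N + n)) := by
  refine ⟨fun a b hab => ?_, fun n => ?_⟩
  · have := hf.1 hab; omega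
  · have := hf.2 (N + n); simpa [Nat.add_assoc] using this

lemma tail_equiv {G : SimpleGraph V} {W f : ℕ → V} (hf : IsRay G f)
    (h : RayEquiv G W f) (N : ℕ) : RayEquiv G W (fun n => f (N + n)) := by
  intro S
  obtain ⟨a, b, ha, hb, w, hw⟩ := h S
  refine ⟨a, b, ha, fun j hj => hb (N + j) (by omega), ?_⟩
  have he : f (b + N) = f (N + b) := by rw [Nat.add_comm]
  refine ⟨(w.append ((rayWalk G f hf.2 b N).copy rfl he)), ?_⟩
  intro v hv
  rw [SimpleGraph.Walk.mem_support_append_iff] at hv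
  rcases hv with hv | hv
  · exact hw v hv
  · rw [SimpleGraph.Walk.support_copy] at hv
    obtain ⟨j, hj, rfl⟩ := rayWalk_support G f hf.2 b N v hv
    exact hb j hj

/-- In a graph with an end of finite vertex-degree `k` there is no family of
`k + 1` rays of that end pairwise intersecting in only finitely many vertices. -/
theorem stmt_8 (G : SimpleGraph V) (W : ℕ → V) (k : ℕ) (hW : IsRay G W)
    (hdeg : EndVertexDegree G W k) :
    ¬ ∃ F : Fin (k + 1) → ℕ → V, (∀ i, IsRay G (F i) ∧ RayEquiv G W (F i)) ∧
      Pairwise fun i j => (Set.range (F i) ∩ Set.range (F j)).Finite := by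
  rintro ⟨F, hF, hpair⟩
  have key : ∀ i : Fin (k + 1), ∃ N : ℕ, ∀ n, N ≤ n → ∀ j, j ≠ i →
      F i n ∉ Set.range (F j) := by
    intro i
    have hB : {n : ℕ | ∃ j, j ≠ i ∧ F i n ∈ Set.range (F j)}.Finite := by
      have hsub : {n : ℕ | ∃ j, j ≠ i ∧ F i n ∈ Set.range (F j)} ⊆
          ⋃ j ∈ {j : Fin (k + 1) | j ≠ i},
            (F i) ⁻¹' (Set.range (F i) ∩ Set.range (F j)) := by
        rintro n ⟨j, hj, hn⟩
        exact Set.mem_biUnion hj ⟨⟨n, rfl⟩, hn⟩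
      refine Set.Finite.subset (Set.Finite.biUnion (Set.finite_univ.subset
        (Set.subset_univ _)) fun j hj => ?_) hsub
      exact (hpair (Ne.symm hj)).preimage (hF i).1.1.injOn
    obtain ⟨M, hM⟩ := hB.bddAbove
    refine ⟨M + 1, fun n hn j hj hmem => ?_⟩
    have : n ≤ M := hM ⟨j, hj, hmem⟩
    omega
  choose N hN using key
  refine hdeg.2 ⟨fun i n => F i (N i + n), fun i => ⟨tail_isRay (hF i).1 _,
    tail_equiv (hF i).1 (hF i).2 _⟩, fun i j hij => ?_⟩
  simp only [Set.disjoint_left, Set.mem_range, not_exists]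
  rintro v ⟨n, rfl⟩ m hm
  exact hN i (N i + n) (Nat.le_add_right _ _) j (Ne.symm hij) ⟨N j + m, hm⟩
end

section
/- Let G be a graph that is the union of an infinite set R of pairwise edge-disjoint rays such that any two rays in R intersect in infinitely many vertices, and let X be an infinite set of vertices of G. Then G contains an infinite family of pairwise edge-disjoint rays whose start vertices are distinct and all lie in X. -/
open SimpleGraph

variable {V : Type*}

private lemma tail_edges (h : ℕ → V) (n : ℕ) :
    rayEdges (fun t => h (n + t)) ⊆ rayEdges h := by
  rintro e ⟨t, rfl⟩
  exact ⟨n + t, rfl⟩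

private lemma fEdgeInj {f : ℕ → V} (hf : Function.Injective f) {t s : ℕ}
    (h : s(f t, f (t+1)) = s(f s, f (s+1))) : t = s := by
  rw [Sym2.eq_iff] at h
  rcases h with ⟨h1, h2⟩ | ⟨h1, h2⟩
  · exact hf h1
  · have := hf h1; have := hf h2; omega

/-- If `G` is the union of an infinite set `R` of pairwise edge-disjoint rays any
two of which meet in infinitely many vertices, and `X` is an infinite vertex set,
then `G` contains infinitely many pairwise edge-disjoint rays starting at distinct
vertices of `X`. -/
theorem stmt_9 (G : SimpleGraph V) (R : Set (ℕ → V)) (X : Set V)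
    (hRinf : R.Infinite) (hray : ∀ f ∈ R, IsRay G f)
    (hed : ∀ f ∈ R, ∀ g ∈ R, f ≠ g → Disjoint (rayEdges f) (rayEdges g))
    (hmeet : ∀ f ∈ R, ∀ g ∈ R, f ≠ g → (Set.range f ∩ Set.range g).Infinite)
    (hVu : ∀ v : V, ∃ f ∈ R, v ∈ Set.range f)
    (hEu : ∀ e ∈ G.edgeSet, ∃ f ∈ R, e ∈ rayEdges f)
    (hX : X.Infinite) :
    ∃ F : ℕ → ℕ → V, (∀ i, IsRay G (F i) ∧ F i 0 ∈ X) ∧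
      Function.Injective (fun i => F i 0) ∧
      Pairwise fun i j => Disjoint (rayEdges (F i)) (rayEdges (F j)) := by
  classical
  by_cases hAex : ∃ f ∈ R, (X ∩ Set.range f).Infinite
  · -- Case A : some ray of R contains infinitely many vertices of X
    obtain ⟨f, hfR, hXf⟩ := hAex
    obtain ⟨finj, fadj⟩ := hray f hfR
    -- infinitely many other rays
    have hdiff : (R \ {f}).Infinite := hRinf.diff (Set.finite_singleton f)
    let g : ℕ ↪ ↥(R \ {f}) := hdiff.natEmbedding
    set G' : ℕ → ℕ → V := fun i => (g i : ℕ → V) with hG'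
    have hG'R : ∀ i, G' i ∈ R := fun i => (g i).2.1
    have hG'f : ∀ i, G' i ≠ f := fun i => (g i).2.2
    have hG'inj : ∀ i j, G' i = G' j → i = j := by
      intro i j h
      exact g.injective (Subtype.coe_injective h)
    have hG'ray : ∀ i, IsRay G (G' i) := fun i => hray _ (hG'R i)
    -- the key step : beyond any bound B find a segment of f starting in X
    -- ending at a "last-meeting" point with G' i
    have key : ∀ i B, ∃ p : ℕ × ℕ × ℕ, B < p.1 ∧ p.1 ≤ p.2.1 ∧ f p.1 ∈ X ∧
        f p.2.1 = G' i p.2.2 ∧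
        ∀ s, p.2.2 < s → G' i s ∉ f '' Set.Icc p.1 p.2.1 := by
      intro i B
      have hS : (f ⁻¹' (X ∩ Set.range f)).Infinite :=
        hXf.preimage Set.inter_subset_right
      obtain ⟨n, hnS, hBn⟩ := hS.exists_gt B
      have hT : (f ⁻¹' (Set.range f ∩ Set.range (G' i))).Infinite :=
        (hmeet f hfR (G' i) (hG'R i) (Ne.symm (hG'f i))).preimage
          Set.inter_subset_left
      obtain ⟨m, hmT, hnm⟩ := hT.exists_gt n
      have hfm : f m ∈ Set.range (G' i) := hmT.2
      obtain ⟨k₀, hk₀⟩ := hfm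
      set A : Set V := f '' Set.Icc n m with hA
      have hAfin : A.Finite := (Set.finite_Icc n m).image f
      set K : Set ℕ := G' i ⁻¹' A with hK
      have hKfin : K.Finite := hAfin.preimage ((hG'ray i).1.injOn)
      have hk₀K : k₀ ∈ K := by
        rw [hK, Set.mem_preimage, hA, hk₀]
        exact ⟨m, ⟨le_of_lt hnm, le_refl m⟩, rfl⟩
      have hKne : hKfin.toFinset.Nonempty := ⟨k₀, hKfin.mem_toFinset.mpr hk₀K⟩
      set k : ℕ := hKfin.toFinset.max' hKne with hkdef
      have hkK : k ∈ K := hKfin.mem_toFinset.mp (hKfin.toFinset.max'_mem hKne)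
      have hkmax : ∀ s ∈ K, s ≤ k := fun s hs =>
        hKfin.toFinset.le_max' s (hKfin.mem_toFinset.mpr hs)
      obtain ⟨m', hm'Icc, hm'⟩ := hkK
      refine ⟨(n, m', k), hBn, hm'Icc.1, hnS.1, hm', ?_⟩
      intro s hks hmem
      have : s ∈ K := by
        rw [hK, Set.mem_preimage, hA]
        exact Set.image_mono (f := f) (Set.Icc_subset_Icc_right hm'Icc.2) hmem
      have hks' : k < s := hks
      exact absurd (hkmax s this) (not_le.mpr hks')
    choose P hP1 hP2 hP3 hP4 hP5 using key
    set data : ℕ → ℕ × ℕ × ℕ :=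
      fun i => Nat.rec (P 0 0) (fun j prev => P (j + 1) prev.2.1) i with hdata
    set n : ℕ → ℕ := fun i => (data i).1 with hn
    set m : ℕ → ℕ := fun i => (data i).2.1 with hm
    set k : ℕ → ℕ := fun i => (data i).2.2 with hk
    have h1 : ∀ i, n i ≤ m i := by
      intro i; cases i with
      | zero => exact hP2 0 0
      | succ j => exact hP2 (j + 1) (m j)
    have h2 : ∀ i, f (n i) ∈ X := by
      intro i; cases i with
      | zero => exact hP3 0 0
      | succ j => exact hP3 (j + 1) (m j)
    have h3 : ∀ i, f (m i) = G' i (k i) := by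
      intro i; cases i with
      | zero => exact hP4 0 0
      | succ j => exact hP4 (j + 1) (m j)
    have h4 : ∀ i s, k i < s → G' i s ∉ f '' Set.Icc (n i) (m i) := by
      intro i; cases i with
      | zero => exact hP5 0 0
      | succ j => exact hP5 (j + 1) (m j)
    have h5 : ∀ i, m i < n (i + 1) := fun i => hP1 (i + 1) (m i)
    have hlt : ∀ i j, i < j → m i < n j := by
      intro i j hij
      induction j with
      | zero => omega
      | succ j ih =>
        rcases Nat.lt_succ_iff_lt_or_eq.mp hij with h | h
        · exact lt_of_lt_of_le (ih h) (le_trans (h1 j) (le_of_lt (h5 j)))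
        · subst h; exact h5 i
    set F : ℕ → ℕ → V := fun i t =>
      if n i + t ≤ m i then f (n i + t) else G' i (k i + (n i + t - m i)) with hF
    have hFle : ∀ i t, n i + t ≤ m i → F i t = f (n i + t) := by
      intro i t h; simp only [hF, if_pos h]
    have hFgt : ∀ i t, ¬ (n i + t ≤ m i) →
        F i t = G' i (k i + (n i + t - m i)) := by
      intro i t h; simp only [hF, if_neg h]
    have hF0 : ∀ i, F i 0 = f (n i) := fun i =>
      hFle i 0 (by simpa using h1 i)
    -- membership in the segment image
    have hmemseg : ∀ i t, n i + t ≤ m i →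
        f (n i + t) ∈ f '' Set.Icc (n i) (m i) :=
      fun i t h => ⟨n i + t, ⟨Nat.le_add_right _ _, h⟩, rfl⟩
    -- edges of F i
    have hsub : ∀ i, rayEdges (F i) ⊆
        {e | ∃ t, n i ≤ t ∧ t < m i ∧ e = s(f t, f (t + 1))} ∪
          rayEdges (G' i) := by
      rintro i e ⟨t, rfl⟩
      by_cases h₂ : n i + (t + 1) ≤ m i
      · left
        have h1' : n i + (t + 1) = (n i + t) + 1 := by omega
        refine ⟨n i + t, Nat.le_add_right _ _, by omega, ?_⟩
        rw [hFle i t (by omega), hFle i (t + 1) h₂, h1']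
      · by_cases h₁ : n i + t ≤ m i
        · have heq : n i + t = m i := by omega
          right
          have h1' : k i + (n i + (t + 1) - m i) = k i + 1 := by omega
          refine ⟨k i, ?_⟩
          rw [hFle i t h₁, hFgt i (t + 1) h₂, h1', heq, h3 i]
        · right
          have h1' : k i + (n i + (t + 1) - m i) =
              (k i + (n i + t - m i)) + 1 := by omega
          refine ⟨k i + (n i + t - m i), ?_⟩
          rw [hFgt i t h₁, hFgt i (t + 1) h₂, h1']
    refine ⟨F, ?_, ?_, ?_⟩
    · intro i
      refine ⟨⟨?_, ?_⟩, ?_⟩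
      · -- injectivity
        intro a b hab
        by_cases ha : n i + a ≤ m i <;> by_cases hb : n i + b ≤ m i
        · rw [hFle i a ha, hFle i b hb] at hab
          have := finj hab; omega
        · rw [hFle i a ha, hFgt i b hb] at hab
          exact absurd (hmemseg i a ha)
            (by rw [hab]; exact h4 i _ (by omega))
        · rw [hFgt i a ha, hFle i b hb] at hab
          exact absurd (hmemseg i b hb)
            (by rw [← hab]; exact h4 i _ (by omega))
        · rw [hFgt i a ha, hFgt i b hb] at hab
          have := (hG'ray i).1 hab; omega
      · -- adjacency
        intro t
        by_cases h₂ : n i + (t + 1) ≤ m i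
        · rw [hFle i t (by omega), hFle i (t + 1) h₂]
          have : n i + (t + 1) = (n i + t) + 1 := by omega
          rw [this]
          exact fadj (n i + t)
        · by_cases h₁ : n i + t ≤ m i
          · have heq : n i + t = m i := by omega
            rw [hFle i t h₁, hFgt i (t + 1) h₂, heq, h3 i]
            have : k i + (n i + (t + 1) - m i) = k i + 1 := by omega
            rw [this]
            exact (hG'ray i).2 (k i)
          · rw [hFgt i t h₁, hFgt i (t + 1) h₂]
            have : k i + (n i + (t + 1) - m i) = (k i + (n i + t - m i)) + 1 := by
              omega
            rw [this]
            exact (hG'ray i).2 _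
      · rw [hF0]; exact h2 i
    · -- injective starts
      intro i j hij
      simp only [hF0] at hij
      have hnij : n i = n j := finj hij
      by_contra hne
      rcases Nat.lt_or_ge i j with h | h
      · have := hlt i j h; have := h1 i; omega
      · have hji : j < i := by omega
        have := hlt j i hji; have := h1 j; omega
    · -- pairwise edge-disjoint
      intro i j hij
      rw [Set.disjoint_left]
      intro e hei hej
      rcases hsub i hei with ⟨t, hti, hti2, rfl⟩ | hgi
      · rcases hsub j hej with ⟨s, hsj, hsj2, hes⟩ | hgj
        · have hts := fEdgeInj finj hes
          rcases Nat.lt_or_ge i j with h | h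
          · have := hlt i j h; omega
          · have := hlt j i (by omega); omega
        · exact Set.disjoint_left.mp
            (hed f hfR (G' j) (hG'R j) (Ne.symm (hG'f j)))
            ⟨t, rfl⟩ hgj
      · rcases hsub j hej with ⟨s, hsj, hsj2, rfl⟩ | hgj
        · exact Set.disjoint_left.mp
            (hed (G' i) (hG'R i) f hfR (hG'f i)) hgi ⟨s, rfl⟩
        · exact Set.disjoint_left.mp
            (hed (G' i) (hG'R i) (G' j) (hG'R j)
              (fun h => hij (hG'inj i j h))) hgi hgj
  · -- Case B : every ray of R contains only finitely many vertices of X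
    push_neg at hAex
    choose φ hφR hφmem using hVu
    choose ν hν using hφmem
    have himg : (φ '' X).Infinite := by
      intro hfin
      apply hX
      have hsubX : X ⊆ ⋃ h ∈ φ '' X, X ∩ Set.range h := by
        intro x hx
        exact Set.mem_biUnion (Set.mem_image_of_mem φ hx) ⟨hx, ν x, hν x⟩
      refine Set.Finite.subset (hfin.biUnion ?_) hsubX
      rintro h ⟨x, hxX, rfl⟩
      exact hAex (φ x) (hφR x)
    let e : ℕ ↪ ↥(φ '' X) := himg.natEmbedding
    have hx : ∀ i : ℕ, ∃ a, a ∈ X ∧ φ a = (e i : ℕ → V) := fun i => (e i).2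
    choose x hxX hxφ using hx
    refine ⟨fun i t => φ (x i) (ν (x i) + t), ?_, ?_, ?_⟩
    · intro i
      obtain ⟨hinj, hadj⟩ := hray _ (hφR (x i))
      refine ⟨⟨?_, ?_⟩, ?_⟩
      · intro a b hab
        have := hinj hab; omega
      · intro t
        show G.Adj (φ (x i) (ν (x i) + t)) (φ (x i) (ν (x i) + (t + 1)))
        have h1' : ν (x i) + (t + 1) = (ν (x i) + t) + 1 := by omega
        rw [h1']
        exact hadj _
      · show φ (x i) (ν (x i) + 0) ∈ X
        rw [Nat.add_zero, hν (x i)]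
        exact hxX i
    · intro i j hij
      have h0 : ∀ a : ℕ, φ (x a) (ν (x a) + 0) = x a := fun a => by
        rw [Nat.add_zero, hν (x a)]
      have hij' : x i = x j := by simpa only [h0] using hij
      have : (e i : ℕ → V) = e j := by rw [← hxφ i, ← hxφ j, hij']
      exact e.injective (Subtype.coe_injective this)
    · intro i j hij
      have hne : φ (x i) ≠ φ (x j) := by
        rw [hxφ i, hxφ j]
        intro h
        exact hij (e.injective (Subtype.coe_injective h))
      exact Set.disjoint_of_subset (tail_edges _ _) (tail_edges _ _)
        (hed _ (hφR (x i)) _ (hφR (x j)) hne)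
end

section
/- Let G be a connected graph, S a finite set of vertices of G, and H a set of pairwise edge-disjoint subgraphs of G such that every connected component of every member of H meets S. Then there exists a finite connected subgraph T of G containing all vertices of S such that at most 2|S| − 2 members of H share an edge with T. -/
open SimpleGraph

variable {V : Type*}

section ConnectorProof

variable {G : SimpleGraph V} {𝓗 : Set G.Subgraph} {S : Finset V}

private lemma edge_mem_of_walk_le {H : G.Subgraph} {u v : V}
    {Q : G.Walk u v} (hQ : Q.toSubgraph ≤ H) {e : Sym2 V} (he : e ∈ Q.edges) :
    e ∈ H.edgeSet := by
  have h1 : e ∈ Q.toSubgraph.edgeSet := by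
    rw [SimpleGraph.Walk.edgeSet_toSubgraph]; exact he
  exact SimpleGraph.Subgraph.edgeSet_mono hQ h1

private lemma key_inner
    (hdisj : ∀ H₁ ∈ 𝓗, ∀ H₂ ∈ 𝓗, H₁ ≠ H₂ → Disjoint H₁.edgeSet H₂.edgeSet)
    (hmeet : ∀ A ∈ 𝓗, ∀ v ∈ A.verts, ∃ s ∈ S, ∃ w : G.Walk v s, w.toSubgraph ≤ A)
    (S₁ S₂ : Finset V) (hS : ∀ s ∈ S, s ∈ S₁ ∨ s ∈ S₂) :
    ∀ {v b : V}, G.Walk v b → b ∈ S₂ →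
      (∃ a ∈ S₁, ∃ W₀ : G.Walk a v, ∃ H₁ : G.Subgraph,
        ∀ A ∈ 𝓗, (∃ e ∈ W₀.edges, e ∈ A.edgeSet) → A = H₁) →
      ∃ a ∈ S₁, ∃ b' ∈ S₂, ∃ W' : G.Walk a b', ∃ H₁ H₂ : G.Subgraph,
        ∀ A ∈ 𝓗, (∃ e ∈ W'.edges, e ∈ A.edgeSet) → A = H₁ ∨ A = H₂ := by
  intro v b W
  induction W with
  | nil =>
    rintro hb ⟨a, ha, W₀, H₁, hW₀⟩
    exact ⟨a, ha, _, hb, W₀, H₁, H₁, fun A hA he => Or.inl (hW₀ A hA he)⟩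
  | @cons x y z h p ih =>
    rintro hb ⟨a, ha, W₀, H₁, hW₀⟩
    by_cases hE : ∃ A ∈ 𝓗, s(x, y) ∈ A.edgeSet
    · obtain ⟨H, hH, hHe⟩ := hE
      have hx : x ∈ H.verts :=
        SimpleGraph.Subgraph.Adj.fst_mem (SimpleGraph.Subgraph.mem_edgeSet.mp hHe)
      obtain ⟨s, hs, Q, hQ⟩ := hmeet H hH x hx
      rcases hS s hs with hs₁ | hs₂
      · -- reroute: new cheap witness from s to y
        refine ih hb ⟨s, hs₁, Q.reverse.concat h, H, ?_⟩
        rintro A hA ⟨e, he, heA⟩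
        rw [SimpleGraph.Walk.edges_concat, List.concat_eq_append, List.mem_append] at he
        have heH : e ∈ H.edgeSet := by
          rcases he with he | he
          · rw [SimpleGraph.Walk.edges_reverse, List.mem_reverse] at he
            exact edge_mem_of_walk_le hQ he
          · simp only [List.mem_singleton] at he
            subst he; exact hHe
        by_contra hne
        exact (Set.disjoint_left.mp (hdisj A hA H hH hne) heA) heH
      · refine ⟨a, ha, s, hs₂, W₀.append Q, H₁, H, ?_⟩
        rintro A hA ⟨e, he, heA⟩
        rw [SimpleGraph.Walk.edges_append, List.mem_append] at he
        rcases he with he | he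
        · exact Or.inl (hW₀ A hA ⟨e, he, heA⟩)
        · have heH : e ∈ H.edgeSet := edge_mem_of_walk_le hQ he
          right
          by_contra hne
          exact (Set.disjoint_left.mp (hdisj A hA H hH hne) heA) heH
    · refine ih hb ⟨a, ha, W₀.concat h, H₁, ?_⟩
      rintro A hA ⟨e, he, heA⟩
      rw [SimpleGraph.Walk.edges_concat, List.concat_eq_append, List.mem_append] at he
      rcases he with he | he
      · exact hW₀ A hA ⟨e, he, heA⟩
      · simp only [List.mem_singleton] at he
        subst he; exact absurd ⟨A, hA, heA⟩ hE

private lemma key (hc : G.Connected)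
    (hdisj : ∀ H₁ ∈ 𝓗, ∀ H₂ ∈ 𝓗, H₁ ≠ H₂ → Disjoint H₁.edgeSet H₂.edgeSet)
    (hmeet : ∀ A ∈ 𝓗, ∀ v ∈ A.verts, ∃ s ∈ S, ∃ w : G.Walk v s, w.toSubgraph ≤ A)
    (S₁ S₂ : Finset V) (hS : ∀ s ∈ S, s ∈ S₁ ∨ s ∈ S₂)
    (h₁ : S₁.Nonempty) (h₂ : S₂.Nonempty) :
    ∃ a ∈ S₁, ∃ b' ∈ S₂, ∃ W' : G.Walk a b', ∃ H₁ H₂ : G.Subgraph,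
      ∀ A ∈ 𝓗, (∃ e ∈ W'.edges, e ∈ A.edgeSet) → A = H₁ ∨ A = H₂ := by
  obtain ⟨a, ha⟩ := h₁
  obtain ⟨b, hb⟩ := h₂
  obtain ⟨W⟩ := hc.preconnected a b
  refine key_inner hdisj hmeet S₁ S₂ hS W hb ⟨a, ha, SimpleGraph.Walk.nil, ⊥, ?_⟩
  rintro A hA ⟨e, he, -⟩
  simp at he

private lemma aux (hc : G.Connected)
    (hdisj : ∀ H₁ ∈ 𝓗, ∀ H₂ ∈ 𝓗, H₁ ≠ H₂ → Disjoint H₁.edgeSet H₂.edgeSet)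
    (hmeet : ∀ A ∈ 𝓗, ∀ v ∈ A.verts, ∃ s ∈ S, ∃ w : G.Walk v s, w.toSubgraph ≤ A) :
    ∀ k : ℕ, ∀ T : G.Subgraph, T.Connected → T.verts.Finite →
      (∃ s ∈ S, s ∈ T.verts) →
      (↑S \ T.verts).ncard ≤ k →
      {A ∈ 𝓗 | ¬ Disjoint A.edgeSet T.edgeSet}.Finite →
      ∃ T' : G.Subgraph, T'.Connected ∧ T'.verts.Finite ∧ ↑S ⊆ T'.verts ∧
        {A ∈ 𝓗 | ¬ Disjoint A.edgeSet T'.edgeSet}.Finite ∧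
        {A ∈ 𝓗 | ¬ Disjoint A.edgeSet T'.edgeSet}.ncard ≤
          {A ∈ 𝓗 | ¬ Disjoint A.edgeSet T.edgeSet}.ncard + 2 * k := by
  classical
  intro k
  induction k with
  | zero =>
    intro T hT hTf hmem hcard hfin
    have hsub : ↑S ⊆ T.verts := by
      by_contra hsub
      obtain ⟨x, hx, hx'⟩ := Set.not_subset.mp hsub
      have hne : (↑S \ T.verts).Nonempty := ⟨x, hx, hx'⟩
      have hfd : (↑S \ T.verts).Finite := (S.finite_toSet).diff
      have := (Set.ncard_pos hfd).mpr hne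
      omega
    exact ⟨T, hT, hTf, hsub, hfin, by omega⟩
  | succ k ih =>
    intro T hT hTf hmem hcard hfin
    by_cases hsub : ↑S ⊆ T.verts
    · exact ⟨T, hT, hTf, hsub, hfin, by omega⟩
    · set S₁ : Finset V := S.filter (fun s => s ∈ T.verts) with hS₁def
      set S₂ : Finset V := S.filter (fun s => s ∉ T.verts) with hS₂def
      have hsplit : ∀ s ∈ S, s ∈ S₁ ∨ s ∈ S₂ := by
        intro s hs
        by_cases h : s ∈ T.verts
        · exact Or.inl (Finset.mem_filter.mpr ⟨hs, h⟩)
        · exact Or.inr (Finset.mem_filter.mpr ⟨hs, h⟩)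
      have h₁ : S₁.Nonempty := by
        obtain ⟨s, hs, hs'⟩ := hmem
        exact ⟨s, Finset.mem_filter.mpr ⟨hs, hs'⟩⟩
      have h₂ : S₂.Nonempty := by
        obtain ⟨x, hx, hx'⟩ := Set.not_subset.mp hsub
        exact ⟨x, Finset.mem_filter.mpr ⟨hx, hx'⟩⟩
      obtain ⟨a, ha, b, hb, W, H₁, H₂, hW⟩ := key hc hdisj hmeet S₁ S₂ hsplit h₁ h₂
      have haT : a ∈ T.verts := (Finset.mem_filter.mp ha).2
      have hbS : b ∈ S := (Finset.mem_filter.mp hb).1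
      have hbT : b ∉ T.verts := (Finset.mem_filter.mp hb).2
      set T' : G.Subgraph := T ⊔ W.toSubgraph with hT'def
      have hT'c : T'.Connected := by
        refine SimpleGraph.Subgraph.connected_sup hT.preconnected W.toSubgraph_connected.preconnected ⟨a, ?_⟩
        exact ⟨haT, W.start_mem_verts_toSubgraph⟩
      have hT'f : T'.verts.Finite := by
        rw [hT'def, SimpleGraph.Subgraph.verts_sup, SimpleGraph.Walk.verts_toSubgraph]
        exact hTf.union (W.support.finite_toSet)
      have hvertsub : T.verts ⊆ T'.verts := by
        rw [hT'def, SimpleGraph.Subgraph.verts_sup]; exact Set.subset_union_left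
      have hbT' : b ∈ T'.verts := by
        rw [hT'def, SimpleGraph.Subgraph.verts_sup]
        exact Or.inr W.end_mem_verts_toSubgraph
      have hsubc : {A ∈ 𝓗 | ¬ Disjoint A.edgeSet T'.edgeSet} ⊆
          insert H₁ (insert H₂ {A ∈ 𝓗 | ¬ Disjoint A.edgeSet T.edgeSet}) := by
        rintro A ⟨hA, hnd⟩
        rw [hT'def, SimpleGraph.Subgraph.edgeSet_sup, Set.disjoint_union_right] at hnd
        by_cases hdT : Disjoint A.edgeSet T.edgeSet
        · have hndW : ¬ Disjoint A.edgeSet W.toSubgraph.edgeSet := by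
            intro hW'; exact hnd ⟨hdT, hW'⟩
          obtain ⟨e, heA, heW⟩ := Set.not_disjoint_iff.mp hndW
          rw [SimpleGraph.Walk.edgeSet_toSubgraph] at heW
          rcases hW A hA ⟨e, heW, heA⟩ with h | h
          · exact Set.mem_insert_iff.mpr (Or.inl h)
          · exact Set.mem_insert_iff.mpr (Or.inr (Set.mem_insert_iff.mpr (Or.inl h)))
        · exact Set.mem_insert_iff.mpr (Or.inr (Set.mem_insert_iff.mpr
            (Or.inr ⟨hA, hdT⟩)))
      have hfin' : {A ∈ 𝓗 | ¬ Disjoint A.edgeSet T'.edgeSet}.Finite :=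
        Set.Finite.subset ((hfin.insert H₂).insert H₁) hsubc
      have hcard' : {A ∈ 𝓗 | ¬ Disjoint A.edgeSet T'.edgeSet}.ncard ≤
          {A ∈ 𝓗 | ¬ Disjoint A.edgeSet T.edgeSet}.ncard + 2 := by
        have h1 := Set.ncard_le_ncard hsubc ((hfin.insert H₂).insert H₁)
        have h2 := Set.ncard_insert_le H₁ (insert H₂ {A ∈ 𝓗 | ¬ Disjoint A.edgeSet T.edgeSet})
        have h3 := Set.ncard_insert_le H₂ {A ∈ 𝓗 | ¬ Disjoint A.edgeSet T.edgeSet}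
        omega
      have hvcard : (↑S \ T'.verts).ncard ≤ k := by
        have hss : ↑S \ T'.verts ⊆ (↑S \ T.verts) \ {b} := by
          rintro x ⟨hx, hx'⟩
          refine ⟨⟨hx, fun h => hx' (hvertsub h)⟩, ?_⟩
          simp only [Set.mem_singleton_iff]
          rintro rfl; exact hx' hbT'
        have hfd : (↑S \ T.verts).Finite := (S.finite_toSet).diff
        have hbm : b ∈ (↑S \ T.verts : Set V) := ⟨hbS, hbT⟩
        have h4 := Set.ncard_le_ncard hss hfd.diff
        have h5 : ((↑S \ T.verts : Set V) \ {b}).ncard = (↑S \ T.verts).ncard - 1 :=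
          Set.ncard_diff_singleton_of_mem hbm
        have h6 : 1 ≤ (↑S \ T.verts : Set V).ncard :=
          (Set.ncard_pos hfd).mpr ⟨b, hbm⟩
        omega
      obtain ⟨T'', h1, h2, h3, h4, h5⟩ := ih T' hT'c hT'f
        ⟨a, (Finset.mem_filter.mp ha).1, hvertsub haT⟩ hvcard hfin'
      exact ⟨T'', h1, h2, h3, h4, by omega⟩

end ConnectorProof

/-- In a connected graph, given a finite vertex set `S` and a family of pairwise
edge-disjoint subgraphs each of whose components meets `S`, there is a finite
connector of `S` sharing an edge with at most `2|S| - 2` members of the family. -/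
theorem stmt_10 (G : SimpleGraph V) (hc : G.Connected) (S : Finset V)
    (𝓗 : Set G.Subgraph)
    (hdisj : ∀ H₁ ∈ 𝓗, ∀ H₂ ∈ 𝓗, H₁ ≠ H₂ → Disjoint H₁.edgeSet H₂.edgeSet)
    (hmeet : ∀ A ∈ 𝓗, ∀ v ∈ A.verts, ∃ s ∈ S, ∃ w : G.Walk v s, w.toSubgraph ≤ A) :
    ∃ T : G.Subgraph, T.Connected ∧ T.verts.Finite ∧ ↑S ⊆ T.verts ∧
      {A ∈ 𝓗 | ¬ Disjoint A.edgeSet T.edgeSet}.Finite ∧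
      {A ∈ 𝓗 | ¬ Disjoint A.edgeSet T.edgeSet}.ncard ≤ 2 * S.card - 2 := by
  classical
  rcases S.eq_empty_or_nonempty with hS | ⟨s₀, hs₀⟩
  · obtain ⟨v⟩ := hc.nonempty
    refine ⟨G.singletonSubgraph v, SimpleGraph.Subgraph.singletonSubgraph_connected, Set.finite_singleton v,
      by simp [hS], ?_, ?_⟩
    all_goals
      have he : {A ∈ 𝓗 | ¬ Disjoint A.edgeSet (G.singletonSubgraph v).edgeSet} = ∅ := by
        ext A
        simp [SimpleGraph.edgeSet_singletonSubgraph]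
    · rw [he]; exact Set.finite_empty
    · rw [he]; simp
  · have hc1 : 1 ≤ S.card := Finset.card_pos.mpr ⟨s₀, hs₀⟩
    have he : {A ∈ 𝓗 | ¬ Disjoint A.edgeSet (G.singletonSubgraph s₀).edgeSet} = ∅ := by
      ext A
      simp [SimpleGraph.edgeSet_singletonSubgraph]
    have hvc : (↑S \ (G.singletonSubgraph s₀).verts).ncard ≤ S.card - 1 := by
      have heq : ↑S \ (G.singletonSubgraph s₀).verts = (↑(S.erase s₀) : Set V) := by
        rw [Finset.coe_erase]
        rfl
      rw [heq, Set.ncard_coe_finset, Finset.card_erase_of_mem hs₀]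
    obtain ⟨T, h1, h2, h3, h4, h5⟩ := aux hc hdisj hmeet (S.card - 1)
      (G.singletonSubgraph s₀) SimpleGraph.Subgraph.singletonSubgraph_connected (Set.finite_singleton s₀)
      ⟨s₀, hs₀, rfl⟩ hvc (by rw [he]; exact Set.finite_empty)
    rw [he] at h5
    simp only [Set.ncard_empty, zero_add] at h5
    exact ⟨T, h1, h2, h3, h4, by omega⟩
end

section
/- Let G be a countable graph with an end ω of finite vertex-degree, and let R be a countably infinite set of rays of G all converging to ω. Then G has a locally finite subgraph H that has exactly one end, that end having finite vertex-degree, such that H contains a tail of every ray in R. -/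
open SimpleGraph

variable {V : Type*}

section Helpers
variable {V : Type*}

private def chainWalk (G : SimpleGraph V) (c : ℕ → V) (i : ℕ) :
    (d : ℕ) → (∀ j, i ≤ j → j < i + d → G.Adj (c j) (c (j+1))) → G.Walk (c i) (c (i + d))
  | 0, _ => Walk.nil
  | d+1, hc => (chainWalk G c i d (fun j h1 h2 => hc j h1 (h2.trans (Nat.lt_succ_self _)))).concat
      (hc (i+d) (Nat.le_add_right _ _) (Nat.lt_succ_self _))

private lemma chainWalk_support (G : SimpleGraph V) (c : ℕ → V) (i : ℕ) :
    ∀ (d : ℕ) (hc : ∀ j, i ≤ j → j < i + d → G.Adj (c j) (c (j+1))),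
      ∀ v ∈ (chainWalk G c i d hc).support, ∃ t, i ≤ t ∧ t ≤ i + d ∧ v = c t := by
  intro d
  induction d with
  | zero => intro hc v hv; simp [chainWalk] at hv; exact ⟨i, le_rfl, le_rfl, hv⟩
  | succ d ih =>
    intro hc v hv
    rw [chainWalk, Walk.support_concat] at hv
    rcases (by simpa using hv : v ∈ (chainWalk G c i d _).support ∨ v = c (i + (d + 1))) with h | h
    · obtain ⟨t, h1, h2, h3⟩ := ih _ v h
      exact ⟨t, h1, h2.trans (by omega), h3⟩
    · exact ⟨i + d + 1, by omega, by omega, h⟩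

private lemma exists_threshold {c : ℕ → V} (hc : Function.Injective c)
    {T : Set V} (hT : T.Finite) : ∃ N, ∀ i, N ≤ i → c i ∉ T := by
  have h1 : {i | c i ∈ T}.Finite := Set.Finite.preimage hc.injOn hT
  obtain ⟨N, hN⟩ := h1.bddAbove
  exact ⟨N + 1, fun i hi hm => absurd (hN hm) (by omega)⟩

end Helpers

/-- A countable graph with a thin end `ω` and a countably infinite set `R` of rays
converging to `ω` has a locally finite subgraph `H` with exactly one end, which is
thin, containing a tail of every ray of `R`. -/
theorem stmt_12 (G : SimpleGraph V) [Countable V]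
    (W : ℕ → V) (k : ℕ) (hW : IsRay G W) (hdeg : EndVertexDegree G W k)
    (R : Set (ℕ → V)) (hRc : R.Countable) (hRinf : R.Infinite)
    (hmem : ∀ f ∈ R, IsRay G f ∧ RayEquiv G W f) :
    ∃ H : G.Subgraph,
      (∀ v : V, (H.neighborSet v).Finite) ∧
      (∃ (f : ℕ → H.verts) (m : ℕ), IsRay H.coe f ∧ EndVertexDegree H.coe f m ∧
        ∀ g : ℕ → H.verts, IsRay H.coe g → RayEquiv H.coe f g) ∧
      (∀ f ∈ R, ∃ a : ℕ, (∀ i, a ≤ i → f i ∈ H.verts) ∧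
        ∀ i, a ≤ i → H.Adj (f i) (f (i + 1))) := by
  classical
  haveI : Infinite V := Infinite.of_injective W hW.1
  obtain ⟨dV⟩ := nonempty_denumerable V
  letI := dV
  let ι : V ≃ ℕ := Denumerable.eqv V
  haveI := hRc.to_subtype
  haveI : Infinite ↥R := hRinf.to_subtype
  obtain ⟨dR⟩ := nonempty_denumerable ↥R
  letI := dR
  let ρ : ℕ ≃ ↥R := (Denumerable.eqv ↥R).symm
  let r : ℕ → (ℕ → V) := fun n => (ρ n).1
  have hr : ∀ n, r n ∈ R := fun n => (ρ n).2
  have hsurj : ∀ f ∈ R, ∃ n, r n = f := fun f hf =>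
    ⟨ρ.symm ⟨f, hf⟩, congrArg Subtype.val (ρ.apply_symm_apply ⟨f, hf⟩)⟩
  -- rank finsets
  let rk : ℕ → Finset V := fun M => (Finset.range (M + 1)).image ι.symm
  have mem_rk : ∀ (M : ℕ) (v : V), v ∈ rk M ↔ ι v ≤ M := by
    intro M v
    simp only [rk, Finset.mem_image, Finset.mem_range]
    constructor
    · rintro ⟨t, ht, rfl⟩; rw [ι.apply_symm_apply]; omega
    · intro h; exact ⟨ι v, by omega, ι.symm_apply_apply v⟩
  have rk_mono : ∀ {M M' : ℕ}, M ≤ M' → rk M ⊆ rk M' := by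
    intro M M' h v hv
    exact (mem_rk _ _).2 (((mem_rk _ _).1 hv).trans h)
  -- connecting walks
  let SQ : ℕ → ℕ → Finset V := fun n m =>
    rk (max n m) ∪ (Finset.range m).image (r n) ∪ (Finset.range m).image W
  choose a b hWt hrt Q hQ using fun n m => (hmem (r n) (hr n)).2 (SQ n m)
  have hSQ_rk : ∀ n m, rk (max n m) ⊆ SQ n m := fun n m =>
    Finset.Subset.trans Finset.subset_union_left Finset.subset_union_left
  have hclean : ∀ {n m M : ℕ} {x : V}, M ≤ max n m → x ∉ SQ n m → x ∉ rk M :=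
    fun hM hx hxm => hx (hSQ_rk _ _ (rk_mono hM hxm))
  have hbge : ∀ n m, m ≤ b n m := by
    intro n m
    by_contra h
    push_neg at h
    exact hrt n m (b n m) le_rfl (Finset.mem_union_left _
      (Finset.mem_union_right _ (Finset.mem_image.2 ⟨b n m, Finset.mem_range.2 h, rfl⟩)))
  have ht_avoid : ∀ n j, b n n ≤ j → r n j ∉ rk n := fun n j hj =>
    hclean (le_max_left n n) (hrt n n j hj)
  -- the subgraph
  let HP : V → V → Prop := fun u w =>
    (∃ i, u = W i ∧ w = W (i + 1)) ∨
    (∃ n i, b n n ≤ i ∧ u = r n i ∧ w = r n (i + 1)) ∨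
    (∃ n m, s(u, w) ∈ (Q n m).edges)
  have HPsub : ∀ u w, HP u w → G.Adj u w := by
    rintro u w (⟨i, rfl, rfl⟩ | ⟨n, i, hi, rfl, rfl⟩ | ⟨n, m, he⟩)
    · exact hW.2 i
    · exact (hmem (r n) (hr n)).1.2 i
    · exact (Q n m).adj_of_mem_edges he
  let H : G.Subgraph :=
    { verts := Set.univ
      Adj := fun u w => HP u w ∨ HP w u
      adj_sub := fun h => h.elim (fun h' => HPsub _ _ h') (fun h' => (HPsub _ _ h').symm)
      edge_vert := fun _ => Set.mem_univ _
      symm := ⟨fun u w h => Or.symm h⟩ }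
  have adj_spine : ∀ i, H.Adj (W i) (W (i + 1)) := fun i => Or.inl (Or.inl ⟨i, rfl, rfl⟩)
  have adj_tail : ∀ n i, b n n ≤ i → H.Adj (r n i) (r n (i + 1)) :=
    fun n i hi => Or.inl (Or.inr (Or.inl ⟨n, i, hi, rfl, rfl⟩))
  have adj_Q : ∀ n m u w, s(u, w) ∈ (Q n m).edges → H.Adj u w :=
    fun n m u w he => Or.inl (Or.inr (Or.inr ⟨n, m, he⟩))
  have hQH : ∀ n m, ∀ e ∈ (Q n m).edges, e ∈ H.spanningCoe.edgeSet := by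
    intro n m e he
    induction e using Sym2.ind with
    | _ u w => exact (SimpleGraph.mem_edgeSet _).2 (adj_Q n m u w he)
  let Q' : ∀ n m, H.spanningCoe.Walk (W (a n m)) (r n (b n m)) :=
    fun n m => (Q n m).transfer _ (hQH n m)
  have hsuppQ' : ∀ n m, (Q' n m).support = (Q n m).support :=
    fun n m => Walk.support_transfer _ _
  let f₀ : ℕ → H.verts := fun i => (⟨W i, Set.mem_univ _⟩ : H.verts)
  have hf₀ : IsRay H.coe f₀ := by
    refine ⟨fun i j h => hW.1 (congrArg Subtype.val h), fun i => ?_⟩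
    show H.Adj (W i) (W (i + 1))
    exact adj_spine i
  let φ : H.spanningCoe →g H.coe :=
    ⟨fun v => ⟨v, Set.mem_univ _⟩, fun {u v} h => h⟩
  -- one-endedness
  have OE : ∀ g : ℕ → H.verts, IsRay H.coe g → RayEquiv H.coe f₀ g := by
    intro g hg S
    let g' : ℕ → V := fun j => (g j).1
    have hg'inj : Function.Injective g' :=
      fun i j h => hg.1 (Subtype.ext h)
    have hg'adj : ∀ j, H.Adj (g' j) (g' (j + 1)) := fun j => hg.2 j
    set M := (S.image Subtype.val).sup ι with hM
    have hMS : ∀ x : H.verts, x.1 ∉ rk M → x ∉ S := by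
      intro x hx hxS
      exact hx ((mem_rk _ _).2 (Finset.le_sup (Finset.mem_image.2 ⟨x, hxS, rfl⟩)))
    have hrkfin : (↑(rk M) : Set V).Finite := (rk M).finite_toSet
    obtain ⟨b₀, hb₀⟩ := exists_threshold hg'inj hrkfin
    obtain ⟨cW, hcW⟩ := exists_threshold hW.1 hrkfin
    choose c hc using fun n => exists_threshold (hmem (r n) (hr n)).1.1 hrkfin
    let reach : V → Prop := fun v => ∃ (aa : ℕ) (p : H.spanningCoe.Walk (W aa) v),
      (∀ i, aa ≤ i → W i ∉ rk M) ∧ ∀ x ∈ p.support, x ∉ rk M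
    have reach_spine : ∀ i, (∀ i', i ≤ i' → W i' ∉ rk M) → reach (W i) := by
      intro i hcl
      refine ⟨i, Walk.nil, hcl, ?_⟩
      intro x hx
      rw [Walk.support_nil, List.mem_singleton] at hx
      subst hx
      exact hcl i le_rfl
    have reach_Q : ∀ n m v, M ≤ max n m → v ∈ (Q' n m).support → reach v := by
      intro n m v hMnm hv
      refine ⟨a n m, (Q' n m).takeUntil v hv, ?_, ?_⟩
      · intro i hi
        exact hclean hMnm (hWt n m i hi)
      · intro x hx
        have hx' : x ∈ (Q n m).support := by
          rw [← hsuppQ' n m]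
          exact Walk.support_takeUntil_subset _ _ hx
        exact hclean hMnm (hQ n m x hx')
    have reach_tail : ∀ n i, b n n ≤ i → (∀ j, i ≤ j → r n j ∉ rk M) → reach (r n i) := by
      intro n i hi hcl
      set m' := max i (max n M) with hm'
      have hbi : i ≤ b n m' := le_trans (le_max_left _ _) (hbge n m')
      have hMm' : M ≤ max n m' :=
        le_trans (le_trans (le_max_right n M) (le_max_right i _)) (le_max_right n m')
      have hieq : r n (i + (b n m' - i)) = r n (b n m') := by
        congr 1; omega
      refine ⟨a n m', ((((chainWalk _ (r n) i (b n m' - i)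
        (fun j hj _ => adj_tail n j (hi.trans hj))).copy rfl hieq).append
        (Q' n m').reverse).reverse : H.spanningCoe.Walk _ _), ?_, ?_⟩
      · intro i' hi'
        exact hclean hMm' (hWt n m' i' hi')
      · intro x hx
        rw [Walk.support_reverse, List.mem_reverse, Walk.support_append] at hx
        rcases List.mem_append.mp hx with h | h
        · rw [Walk.support_copy] at h
          obtain ⟨t, ht1, _, rfl⟩ := chainWalk_support _ _ _ _ _ x h
          exact hcl t ht1
        · have h' := List.mem_of_mem_tail h
          rw [Walk.support_reverse, List.mem_reverse] at h'
          have hx' : x ∈ (Q n m').support := by rw [← hsuppQ' n m']; exact h'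
          exact hclean hMm' (hQ n m' x hx')
    -- the bad set
    let Bad : Set V := (W '' Set.Iio cW) ∪ (⋃ n ∈ Set.Iio M, r n '' Set.Iio (c n)) ∪
      (⋃ n ∈ Set.Iio M, ⋃ m ∈ Set.Iio M, {x | x ∈ (Q n m).support})
    have hBadfin : Bad.Finite := by
      refine Set.Finite.union (Set.Finite.union ?_ ?_) ?_
      · exact (Set.finite_Iio _).image _
      · exact Set.Finite.biUnion (Set.finite_Iio _) (fun n _ => (Set.finite_Iio _).image _)
      · exact Set.Finite.biUnion (Set.finite_Iio _) (fun n _ =>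
          Set.Finite.biUnion (Set.finite_Iio _) (fun m _ => (Q n m).support.finite_toSet))
    obtain ⟨j₁, hj₁⟩ := exists_threshold hg'inj hBadfin
    set j₀ := max b₀ j₁ with hj₀
    have hgood : g' j₀ ∉ Bad := hj₁ j₀ (le_max_right _ _)
    have hA : g' j₀ ∉ W '' Set.Iio cW := fun h => hgood (Or.inl (Or.inl h))
    have hB : g' j₀ ∉ ⋃ n ∈ Set.Iio M, r n '' Set.Iio (c n) := fun h => hgood (Or.inl (Or.inr h))
    have hC : g' j₀ ∉ ⋃ n ∈ Set.Iio M, ⋃ m ∈ Set.Iio M, {x | x ∈ (Q n m).support} :=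
      fun h => hgood (Or.inr h)
    have hgb : ∀ j, j₀ ≤ j → g' j ∉ rk M := fun j hj => hb₀ j ((le_max_left _ _).trans hj)
    have hspineclean : ∀ i : ℕ, g' j₀ = W i → reach (g' j₀) := by
      intro i hu
      have hcWi : cW ≤ i := by
        by_contra h
        exact hA ⟨i, Set.mem_Iio.2 (by omega), hu.symm⟩
      rw [hu]
      exact reach_spine i (fun i' hi' => hcW i' (hcWi.trans hi'))
    have htailclean : ∀ n i, b n n ≤ i → g' j₀ = r n i → reach (g' j₀) := by
      intro n i hi hu
      rw [hu]
      apply reach_tail n i hi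
      rcases le_or_gt M n with hMn | hnM
      · intro j hj hmemrk
        exact ht_avoid n j (hi.trans hj) (rk_mono hMn hmemrk)
      · have hci : c n ≤ i := by
          by_contra h
          exact hB (Set.mem_biUnion (Set.mem_Iio.2 hnM) ⟨i, Set.mem_Iio.2 (by omega), hu.symm⟩)
        intro j hj
        exact hc n j (hci.trans hj)
    have hQcase : ∀ n m, g' j₀ ∈ (Q n m).support → reach (g' j₀) := by
      intro n m hv
      rcases le_or_gt M (max n m) with h | h
      · refine reach_Q n m _ h ?_
        rw [hsuppQ' n m]
        exact hv
      · exfalso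
        apply hC
        have hn : n < M := lt_of_le_of_lt (le_max_left n m) h
        have hm : m < M := lt_of_le_of_lt (le_max_right n m) h
        exact Set.mem_biUnion (Set.mem_Iio.2 hn) (Set.mem_biUnion (Set.mem_Iio.2 hm) hv)
    have hreach0 : reach (g' j₀) := by
      rcases hg'adj j₀ with (⟨i, hu, _⟩ | ⟨n, i, hi, hu, _⟩ | ⟨n, m, he⟩) |
        (⟨i, _, hu⟩ | ⟨n, i, hi, _, hu⟩ | ⟨n, m, he⟩)
      · exact hspineclean i hu
      · exact htailclean n i hi hu
      · exact hQcase n m ((Q n m).fst_mem_support_of_mem_edges he)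
      · exact hspineclean (i + 1) hu
      · exact htailclean n (i + 1) (hi.trans (Nat.le_succ i)) hu
      · exact hQcase n m ((Q n m).snd_mem_support_of_mem_edges he)
    obtain ⟨aa, p, haa, hp⟩ := hreach0
    refine ⟨aa, j₀, ?_, ?_, ?_⟩
    · intro i hi
      exact hMS (f₀ i) (haa i hi)
    · intro j hj
      exact hMS (g j) (hgb j hj)
    · refine ⟨p.map φ, ?_⟩
      intro x hx
      rw [Walk.support_map] at hx
      obtain ⟨y, hy, rfl⟩ := List.mem_map.mp hx
      exact hMS _ (hp y hy)
  -- transfer of equivalence to G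
  have TR : ∀ g : ℕ → H.verts, RayEquiv H.coe f₀ g → RayEquiv G W (fun j => (g j).1) := by
    intro g hg S
    obtain ⟨aa, bb, h1, h2, w, hw⟩ := hg (S.preimage Subtype.val Subtype.val_injective.injOn)
    refine ⟨aa, bb, ?_, ?_, ⟨w.map H.hom, ?_⟩⟩
    · intro i hi hmemS
      exact h1 i hi (Finset.mem_preimage.2 hmemS)
    · intro j hj hmemS
      exact h2 j hj (Finset.mem_preimage.2 hmemS)
    · intro v hv
      have hv' : v ∈ (w.map H.hom).support := hv
      rw [Walk.support_map] at hv'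
      obtain ⟨y, hy, rfl⟩ := List.mem_map.mp hv'
      intro hmemS
      exact hw y hy (Finset.mem_preimage.2 hmemS)
  -- degree
  let P' : ℕ → Prop := fun m => ∃ F : Fin m → ℕ → H.verts,
    (∀ i, IsRay H.coe (F i) ∧ RayEquiv H.coe f₀ (F i)) ∧
    Pairwise fun i j => Disjoint (Set.range (F i)) (Set.range (F j))
  have hP0 : P' 0 := ⟨Fin.elim0, fun i => i.elim0, by intro i; exact i.elim0⟩
  have hPk : ¬ P' (k + 1) := by
    rintro ⟨F, hF, hdisj⟩
    apply hdeg.2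
    refine ⟨fun i j => (F i j).1, fun i => ⟨⟨fun x y hxy => (hF i).1.1 (Subtype.ext hxy),
      fun j => H.adj_sub ((hF i).1.2 j)⟩, TR (F i) (hF i).2⟩, ?_⟩
    intro i j hij
    have hd := Set.disjoint_left.mp (hdisj hij)
    refine Set.disjoint_left.mpr ?_
    rintro x ⟨s, rfl⟩ ⟨tt, hx⟩
    exact hd (Set.mem_range_self s) ⟨tt, Subtype.ext hx⟩
  have hex : ∃ m, ¬ P' m := ⟨k + 1, hPk⟩
  have hm₀ : 1 ≤ Nat.find hex := by
    rcases Nat.eq_zero_or_pos (Nat.find hex) with h | h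
    · exact absurd hP0 (h ▸ Nat.find_spec hex)
    · exact h
  -- local finiteness
  have locfin : ∀ v : V, (H.neighborSet v).Finite := by
    intro v
    have hsub : H.neighborSet v ⊆
        ((fun i => W (i + 1)) '' {i | W i = v}) ∪ (W '' {i | W (i + 1) = v}) ∪
        (⋃ n ∈ Set.Iio (ι v), ((fun i => r n (i + 1)) '' {i | r n i = v} ∪
          (r n) '' {i | r n (i + 1) = v})) ∪
        (⋃ n ∈ Set.Iio (ι v), ⋃ m ∈ Set.Iio (ι v), {x | x ∈ (Q n m).support}) := by
      intro w hw
      have hrk_lt : ∀ n j, b n n ≤ j → r n j = v → n < ι v := by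
        intro n j hj hv
        have := ht_avoid n j hj
        rw [hv, mem_rk] at this
        omega
      have hQ_lt : ∀ n m, v ∈ (Q n m).support → n < ι v ∧ m < ι v := by
        intro n m hv
        have := hclean (le_refl (max n m)) (hQ n m v hv)
        rw [mem_rk] at this
        constructor <;> omega
      rcases hw with (⟨i, hv, hw'⟩ | ⟨n, i, hi, hv, hw'⟩ | ⟨n, m, he⟩) |
        (⟨i, hw', hv⟩ | ⟨n, i, hi, hw', hv⟩ | ⟨n, m, he⟩)
      · exact Or.inl (Or.inl (Or.inl ⟨i, hv.symm, hw'.symm⟩))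
      · refine Or.inl (Or.inr (Set.mem_biUnion (Set.mem_Iio.2 (hrk_lt n i hi hv.symm)) ?_))
        exact Or.inl ⟨i, hv.symm, hw'.symm⟩
      · have hvsupp : v ∈ (Q n m).support := (Q n m).fst_mem_support_of_mem_edges he
        have hwsupp : w ∈ (Q n m).support := (Q n m).snd_mem_support_of_mem_edges he
        obtain ⟨hn, hm⟩ := hQ_lt n m hvsupp
        exact Or.inr (Set.mem_biUnion (Set.mem_Iio.2 hn)
          (Set.mem_biUnion (Set.mem_Iio.2 hm) hwsupp))
      · exact Or.inl (Or.inl (Or.inr ⟨i, hv.symm, hw'.symm⟩))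
      · refine Or.inl (Or.inr (Set.mem_biUnion
          (Set.mem_Iio.2 (hrk_lt n (i + 1) (hi.trans (Nat.le_succ i)) hv.symm)) ?_))
        exact Or.inr ⟨i, hv.symm, hw'.symm⟩
      · have hvsupp : v ∈ (Q n m).support := (Q n m).snd_mem_support_of_mem_edges he
        have hwsupp : w ∈ (Q n m).support := (Q n m).fst_mem_support_of_mem_edges he
        obtain ⟨hn, hm⟩ := hQ_lt n m hvsupp
        exact Or.inr (Set.mem_biUnion (Set.mem_Iio.2 hn)
          (Set.mem_biUnion (Set.mem_Iio.2 hm) hwsupp))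
    refine Set.Finite.subset ?_ hsub
    refine Set.Finite.union (Set.Finite.union (Set.Finite.union ?_ ?_) ?_) ?_
    · exact Set.Finite.image _ (Set.Subsingleton.finite (fun x hx y hy => hW.1 (hx.trans hy.symm)))
    · exact Set.Finite.image _ (Set.Subsingleton.finite
        (fun x hx y hy => Nat.succ_injective (hW.1 (hx.trans hy.symm))))
    · refine Set.Finite.biUnion (Set.finite_Iio _) (fun n _ => Set.Finite.union ?_ ?_)
      · exact Set.Finite.image _ (Set.Subsingleton.finite
          (fun x hx y hy => (hmem (r n) (hr n)).1.1 (hx.trans hy.symm)))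
      · exact Set.Finite.image _ (Set.Subsingleton.finite
          (fun x hx y hy => Nat.succ_injective ((hmem (r n) (hr n)).1.1 (hx.trans hy.symm))))
    · exact Set.Finite.biUnion (Set.finite_Iio _) (fun n _ =>
        Set.Finite.biUnion (Set.finite_Iio _) (fun m _ => (Q n m).support.finite_toSet))
  -- assemble
  refine ⟨H, locfin, ⟨f₀, Nat.find hex - 1, hf₀, ⟨?_, ?_⟩, OE⟩, ?_⟩
  · exact not_not.mp (Nat.find_min hex (by omega))
  · have : Nat.find hex - 1 + 1 = Nat.find hex := by omega
    rw [this]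
    exact Nat.find_spec hex
  · intro f hf
    obtain ⟨n, rfl⟩ := hsurj f hf
    exact ⟨b n n, fun i _ => Set.mem_univ _, fun i hi => adj_tail n i hi⟩
end
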